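/- arXiv:2410.20786 — 2 statements merged into one kernel-verified Lean document; each statement's English description precedes it below -/
import Mathlib

section
/- Min-cost per-step worst-case bound: in a finite discounted MDP, let δ > 0, let C : S → A → ℝ be a cost signal, and let π, π' be policies with (π s a = 0 → π' s a = 0) such that D̄_KL(π'‖π) ≤ δ and 𝔸_C(π,π') ≤ 0 (these conditions hold when π' solves the trust-region subproblem minimizing 𝔸_C(π,·) subject to D̄_KL(·‖π) ≤ δ over a class containing π). Then J_C(π') − J_C(π) ≤ √(2δ) · γ · ε_C(π,π') / (1−γ)². -/
open Real BigOperators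

/-- Induced transition matrix of policy `pol`: `P_pol(s,s') = ∑ a, pol s a * P s a s'`. -/
noncomputable def transMat {S A : Type*} [Fintype A] (P : S → A → S → ℝ)
    (pol : S → A → ℝ) : Matrix S S ℝ :=
  fun s s' => ∑ a, pol s a * P s a s'

/-- Discounted state visitation distribution
`d_pol(s) = (1-γ) ∑ₜ γ^t ∑_{s0} ρ0 s0 * (P_pol^t)(s0,s)`. -/
noncomputable def dVisit {S A : Type*} [Fintype S] [DecidableEq S] [Fintype A]
    (P : S → A → S → ℝ) (γ : ℝ) (ρ0 : S → ℝ) (pol : S → A → ℝ) (s : S) : ℝ :=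
  (1 - γ) * ∑' t : ℕ, γ ^ t * ∑ s0, ρ0 s0 * (transMat P pol ^ t) s0 s

/-- Value function of signal `F` under policy `pol`. -/
noncomputable def Vfun {S A : Type*} [Fintype S] [DecidableEq S] [Fintype A]
    (P : S → A → S → ℝ) (γ : ℝ) (F : S → A → ℝ) (pol : S → A → ℝ) (s : S) : ℝ :=
  ∑' t : ℕ, γ ^ t * ∑ s', (transMat P pol ^ t) s s' * ∑ a, pol s' a * F s' a

/-- Return `J_F(pol) = ∑ s, ρ0 s * V_F^pol(s)`. -/
noncomputable def Jret {S A : Type*} [Fintype S] [DecidableEq S] [Fintype A]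
    (P : S → A → S → ℝ) (γ : ℝ) (ρ0 : S → ℝ) (F : S → A → ℝ) (pol : S → A → ℝ) : ℝ :=
  ∑ s, ρ0 s * Vfun P γ F pol s

/-- Action-value function `Q_F^pol(s,a) = F s a + γ ∑_{s'} P s a s' * V_F^pol(s')`. -/
noncomputable def Qfun {S A : Type*} [Fintype S] [DecidableEq S] [Fintype A]
    (P : S → A → S → ℝ) (γ : ℝ) (F : S → A → ℝ) (pol : S → A → ℝ) (s : S) (a : A) : ℝ :=
  F s a + γ * ∑ s', P s a s' * Vfun P γ F pol s'

/-- Advantage function `A_F^pol(s,a) = Q_F^pol(s,a) - V_F^pol(s)`. -/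
noncomputable def Adv {S A : Type*} [Fintype S] [DecidableEq S] [Fintype A]
    (P : S → A → S → ℝ) (γ : ℝ) (F : S → A → ℝ) (pol : S → A → ℝ) (s : S) (a : A) : ℝ :=
  Qfun P γ F pol s a - Vfun P γ F pol s

/-- Expected surrogate advantage
`𝔸_F(pol,pol') = ∑ s, d_pol(s) ∑ a, pol' s a * A_F^pol(s,a)`. -/
noncomputable def surrAdv {S A : Type*} [Fintype S] [DecidableEq S] [Fintype A]
    (P : S → A → S → ℝ) (γ : ℝ) (ρ0 : S → ℝ) (F : S → A → ℝ)
    (pol pol' : S → A → ℝ) : ℝ :=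
  ∑ s, dVisit P γ ρ0 pol s * ∑ a, pol' s a * Adv P γ F pol s a

/-- `ε_F(pol,pol') = max_s |∑ a, pol' s a * A_F^pol(s,a)|`. -/
noncomputable def epsAdv {S A : Type*} [Fintype S] [DecidableEq S] [Fintype A] [Nonempty S]
    (P : S → A → S → ℝ) (γ : ℝ) (F : S → A → ℝ) (pol pol' : S → A → ℝ) : ℝ :=
  Finset.univ.sup' Finset.univ_nonempty fun s => |∑ a, pol' s a * Adv P γ F pol s a|

/-- Per-state KL divergence `KL(pol'‖pol)(s) = ∑ a, pol' s a * log (pol' s a / pol s a)`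
(with the convention `0 * log 0 = 0`, automatic since `Real.log 0 = 0`). -/
noncomputable def klState {S A : Type*} [Fintype A] (pol' pol : S → A → ℝ) (s : S) : ℝ :=
  ∑ a, pol' s a * Real.log (pol' s a / pol s a)

/-- Averaged KL divergence `D̄_KL(pol'‖pol) = ∑ s, d_pol(s) * KL(pol'‖pol)(s)`. -/
noncomputable def avgKL {S A : Type*} [Fintype S] [DecidableEq S] [Fintype A]
    (P : S → A → S → ℝ) (γ : ℝ) (ρ0 : S → ℝ) (pol' pol : S → A → ℝ) : ℝ :=
  ∑ s, dVisit P γ ρ0 pol s * klState pol' pol s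




-- ===== auxiliary lemmas =====

lemma log_ge (t : ℝ) (ht : 0 < t) : 1 - t⁻¹ ≤ Real.log t := by
  have h := Real.log_le_sub_one_of_pos (show (0:ℝ) < t⁻¹ by positivity)
  rw [Real.log_inv] at h; linarith

noncomputable def phiAux (t : ℝ) : ℝ := (t+1) * Real.log t - 2*(t-1)

lemma phiAux_deriv (t : ℝ) (ht : 0 < t) :
    HasDerivAt phiAux (Real.log t + t⁻¹ - 1) t := by
  have h1 : HasDerivAt (fun t : ℝ => (t+1) * Real.log t)
      (1 * Real.log t + (t+1) * t⁻¹) t :=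
    ((hasDerivAt_id t).add_const 1).mul (Real.hasDerivAt_log (ne_of_gt ht))
  have h2 : HasDerivAt (fun t : ℝ => 2*(t-1)) 2 t := by
    simpa using ((hasDerivAt_id t).sub_const 1).const_mul 2
  refine (h1.sub h2).congr_deriv ?_
  rw [add_mul, mul_inv_cancel₀ ht.ne']; ring

lemma phiAux_nonneg (t : ℝ) (ht : 1 ≤ t) : 0 ≤ phiAux t := by
  have hmono : MonotoneOn phiAux (Set.Ici (1:ℝ)) := by
    apply monotoneOn_of_deriv_nonneg (convex_Ici 1)
    · exact fun x hx => (phiAux_deriv x (lt_of_lt_of_le one_pos (by simpa using hx))).continuousAt.continuousWithinAt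
    · intro x hx
      exact (phiAux_deriv x (lt_of_lt_of_le one_pos (le_of_lt (by simpa using hx)))).differentiableAt.differentiableWithinAt
    · intro x hx
      have hx1 : (1:ℝ) < x := by simpa using hx
      rw [(phiAux_deriv x (by linarith)).deriv]
      have := log_ge x (by linarith)
      linarith
  have h1 : phiAux 1 = 0 := by simp [phiAux]
  have := hmono (Set.self_mem_Ici) (show t ∈ Set.Ici (1:ℝ) from ht) ht
  linarith

lemma phiAux_nonpos (t : ℝ) (ht0 : 0 < t) (ht : t ≤ 1) : phiAux t ≤ 0 := by
  have hmono : MonotoneOn phiAux (Set.Ioc (0:ℝ) 1) := by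
    apply monotoneOn_of_deriv_nonneg (convex_Ioc 0 1)
    · exact fun x hx => (phiAux_deriv x hx.1).continuousAt.continuousWithinAt
    · intro x hx
      have hx0 : 0 < x := (interior_subset (s := Set.Ioc (0:ℝ) 1) hx).1
      exact (phiAux_deriv x hx0).differentiableAt.differentiableWithinAt
    · intro x hx
      have hx0 : 0 < x := (interior_subset (s := Set.Ioc (0:ℝ) 1) hx).1
      rw [(phiAux_deriv x hx0).deriv]
      have := log_ge x hx0
      linarith
  have h1 : phiAux 1 = 0 := by simp [phiAux]
  have := hmono (Set.mem_Ioc.2 ⟨ht0, ht⟩) (Set.mem_Ioc.2 ⟨one_pos, le_refl 1⟩) ht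
  linarith

noncomputable def hAux (t : ℝ) : ℝ := (2*t+4)*(t*Real.log t + 1 - t) - 3*(t-1)^2

lemma hAux_deriv (t : ℝ) (ht : 0 < t) : HasDerivAt hAux (4 * phiAux t) t := by
  have hlog : HasDerivAt (fun t : ℝ => t * Real.log t + 1 - t) (Real.log t) t := by
    have := ((hasDerivAt_id t).mul (Real.hasDerivAt_log (ne_of_gt ht)))
    have h2 := (this.add_const 1).sub (hasDerivAt_id t)
    refine h2.congr_deriv ?_
    simp [ht.ne']
  have hl : HasDerivAt (fun t : ℝ => 2*t+4) 2 t := by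
    simpa using ((hasDerivAt_id t).const_mul 2).add_const 4
  have hsq : HasDerivAt (fun t : ℝ => 3*(t-1)^2) (3*(2*(t-1))) t := by
    simpa using (((hasDerivAt_id t).sub_const 1).pow 2).const_mul 3
  have := (hl.mul hlog).sub hsq
  refine this.congr_deriv ?_
  simp only [phiAux]
  ring

lemma hAux_nonneg (t : ℝ) (ht : 0 < t) : 0 ≤ hAux t := by
  have h1 : hAux 1 = 0 := by norm_num [hAux]
  rcases le_or_gt 1 t with h | h
  · have hmono : MonotoneOn hAux (Set.Ici (1:ℝ)) := by
      apply monotoneOn_of_deriv_nonneg (convex_Ici 1)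
      · exact fun x hx => (hAux_deriv x (lt_of_lt_of_le one_pos (by simpa using hx))).continuousAt.continuousWithinAt
      · intro x hx
        exact (hAux_deriv x (lt_of_lt_of_le one_pos (le_of_lt (by simpa using hx)))).differentiableAt.differentiableWithinAt
      · intro x hx
        have hx1 : (1:ℝ) < x := by simpa using hx
        rw [(hAux_deriv x (by linarith)).deriv]
        have := phiAux_nonneg x hx1.le
        linarith
    have := hmono Set.self_mem_Ici (show t ∈ Set.Ici (1:ℝ) from h) h
    linarith
  · have hmono : AntitoneOn hAux (Set.Ioc (0:ℝ) 1) := by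
      apply antitoneOn_of_deriv_nonpos (convex_Ioc 0 1)
      · exact fun x hx => (hAux_deriv x hx.1).continuousAt.continuousWithinAt
      · intro x hx
        have hx0 : 0 < x := (interior_subset (s := Set.Ioc (0:ℝ) 1) hx).1
        exact (hAux_deriv x hx0).differentiableAt.differentiableWithinAt
      · intro x hx
        have hx0 : 0 < x := (interior_subset (s := Set.Ioc (0:ℝ) 1) hx).1
        have hx1 : x ≤ 1 := (interior_subset (s := Set.Ioc (0:ℝ) 1) hx).2
        rw [(hAux_deriv x hx0).deriv]
        have := phiAux_nonpos x hx0 hx1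
        linarith
    have := hmono (Set.mem_Ioc.2 ⟨ht, h.le⟩) (Set.mem_Ioc.2 ⟨one_pos, le_refl 1⟩) h.le
    linarith

/-- Pointwise Pinsker-type inequality. -/
lemma pointwise_pinsker (x y : ℝ) (hx : 0 ≤ x) (hy : 0 ≤ y) (h0 : y = 0 → x = 0) :
    3*(x-y)^2 ≤ (2*x+4*y)*(x * Real.log (x/y) + y - x) := by
  rcases eq_or_lt_of_le hy with hy0 | hy0
  · subst hy0; rw [h0 rfl]; norm_num
  rcases eq_or_lt_of_le hx with hx0 | hx0
  · rw [← hx0]; simp; nlinarith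
  · have h := hAux_nonneg (x/y) (by positivity)
    unfold hAux at h
    have hxy : x/y*y = x := by field_simp
    have hlog : Real.log (x/y) = Real.log (x/y) := rfl
    have key : 0 ≤ ((2*(x/y)+4)*((x/y)*Real.log (x/y) + 1 - x/y) - 3*(x/y-1)^2) * y^2 := by
      apply mul_nonneg h (by positivity)
    have expand : ((2*(x/y)+4)*((x/y)*Real.log (x/y) + 1 - x/y) - 3*(x/y-1)^2) * y^2
        = (2*x+4*y)*(x * Real.log (x/y) + y - x) - 3*(x-y)^2 := by
      field_simp
    rw [expand] at key; linarith

section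
variable {A : Type*} [Fintype A] (p q : A → ℝ)
  (hp0 : ∀ a, 0 ≤ p a) (hq0 : ∀ a, 0 ≤ q a)
  (hp1 : ∑ a, p a = 1) (hq1 : ∑ a, q a = 1)
  (habs : ∀ a, q a = 0 → p a = 0)

include hp0 hq0 habs in
lemma klterm_nonneg (a : A) : 0 ≤ p a * Real.log (p a / q a) + q a - p a := by
  have h := pointwise_pinsker (p a) (q a) (hp0 a) (hq0 a) (habs a)
  have hn : (0:ℝ) ≤ 2*p a + 4*q a := by have := hp0 a; have := hq0 a; linarith
  rcases eq_or_lt_of_le hn with h2 | h2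
  · have hq : q a = 0 := by nlinarith [hp0 a, hq0 a]
    have hp : p a = 0 := habs a hq
    simp [hp, hq]
  · nlinarith [sq_nonneg (p a - q a)]

include hp0 hq0 hp1 hq1 habs in
lemma kl_nonneg' : 0 ≤ ∑ a, p a * Real.log (p a / q a) := by
  have := Finset.sum_nonneg (fun a (_ : a ∈ Finset.univ) => klterm_nonneg p q hp0 hq0 habs a)
  have he : ∑ a, (p a * Real.log (p a / q a) + q a - p a)
      = (∑ a, p a * Real.log (p a / q a)) + (∑ a, q a) - ∑ a, p a := by
    rw [Finset.sum_sub_distrib, Finset.sum_add_distrib]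
  rw [he, hp1, hq1] at this; linarith

include hp0 hq0 hp1 hq1 habs in
lemma pinsker_finset :
    (∑ a, |p a - q a|) ^ 2 ≤ 2 * ∑ a, p a * Real.log (p a / q a) := by
  have hn : ∀ a, (0:ℝ) ≤ 2*p a + 4*q a := fun a => by have := hp0 a; have := hq0 a; linarith
  set f : A → ℝ := fun a => Real.sqrt (2*p a + 4*q a) with hf
  set g : A → ℝ := fun a => |p a - q a| / Real.sqrt (2*p a + 4*q a) with hg
  have hfg : ∀ a, f a * g a = |p a - q a| := by
    intro a
    rcases eq_or_lt_of_le (hn a) with h2 | h2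
    · have hq : q a = 0 := by nlinarith [hp0 a, hq0 a]
      have hp : p a = 0 := habs a hq
      simp [hf, hg, hp, hq]
    · simp only [hf, hg]
      rw [mul_div_assoc', mul_comm, mul_div_assoc,
        div_self (by positivity : Real.sqrt (2*p a+4*q a) ≠ 0), mul_one]
  have CS := Finset.sum_mul_sq_le_sq_mul_sq Finset.univ f g
  simp only [hfg] at CS
  have hf2 : ∑ a, f a ^ 2 = 6 := by
    have : ∀ a, f a ^ 2 = 2 * p a + 4 * q a := fun a => Real.sq_sqrt (hn a)
    simp only [this, Finset.sum_add_distrib, ← Finset.mul_sum, hp1, hq1]; norm_num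
  have hg2 : ∑ a, g a ^ 2 ≤ (∑ a, p a * Real.log (p a / q a)) / 3 := by
    have key : ∀ a, g a ^ 2 ≤ (p a * Real.log (p a / q a) + q a - p a) / 3 := by
      intro a
      have h := pointwise_pinsker (p a) (q a) (hp0 a) (hq0 a) (habs a)
      rcases eq_or_lt_of_le (hn a) with h2 | h2
      · have hq : q a = 0 := by nlinarith [hp0 a, hq0 a]
        have hp : p a = 0 := habs a hq
        simp [hg, hp, hq]
      · have hgval : g a ^ 2 = (p a - q a)^2 / (2*p a + 4*q a) := by
          simp only [hg, div_pow, sq_abs, Real.sq_sqrt (hn a)]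
        rw [hgval, div_le_div_iff₀ h2 (by norm_num : (0:ℝ) < 3)]
        nlinarith
    calc ∑ a, g a ^ 2 ≤ ∑ a, (p a * Real.log (p a / q a) + q a - p a) / 3 :=
          Finset.sum_le_sum (fun a _ => key a)
      _ = (∑ a, p a * Real.log (p a / q a)) / 3 := by
          rw [← Finset.sum_div]
          congr 1
          rw [Finset.sum_sub_distrib, Finset.sum_add_distrib, hp1, hq1]; ring
  have hKL0 := kl_nonneg' p q hp0 hq0 hp1 hq1 habs
  calc (∑ a, |p a - q a|) ^ 2 ≤ (∑ a, f a ^ 2) * ∑ a, g a ^ 2 := CS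
    _ ≤ 6 * ((∑ a, p a * Real.log (p a / q a)) / 3) := by
        rw [hf2]; exact mul_le_mul_of_nonneg_left hg2 (by norm_num)
    _ = 2 * ∑ a, p a * Real.log (p a / q a) := by ring
end

section
variable {S A : Type*} [Fintype S] [DecidableEq S] [Fintype A]
variable {P : S → A → S → ℝ} {pol : S → A → ℝ}
variable (hP0 : ∀ s a s', 0 ≤ P s a s') (hP1 : ∀ s a, ∑ s', P s a s' = 1)
variable (hpol0 : ∀ s a, 0 ≤ pol s a) (hpol1 : ∀ s, ∑ a, pol s a = 1)

include hP0 hpol0 in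
lemma tm_nonneg (s s' : S) : 0 ≤ transMat P pol s s' :=
  Finset.sum_nonneg fun a _ => mul_nonneg (hpol0 s a) (hP0 s a s')

include hP1 hpol1 in
lemma tm_rowsum (s : S) : ∑ s', transMat P pol s s' = 1 := by
  unfold transMat
  rw [Finset.sum_comm]
  simp_rw [← Finset.mul_sum, hP1]
  simpa using hpol1 s

include hP0 hpol0 in
lemma tmpow_nonneg (t : ℕ) (s s' : S) : 0 ≤ (transMat P pol ^ t) s s' := by
  induction t generalizing s s' with
  | zero => simp [Matrix.one_apply]; positivity
  | succ t ih =>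
    rw [pow_succ, Matrix.mul_apply]
    exact Finset.sum_nonneg fun j _ => mul_nonneg (ih s j) (tm_nonneg hP0 hpol0 j s')

include hP0 hP1 hpol0 hpol1 in
lemma tmpow_rowsum (t : ℕ) (s : S) : ∑ s', (transMat P pol ^ t) s s' = 1 := by
  induction t generalizing s with
  | zero => simp [Matrix.one_apply]
  | succ t ih =>
    simp_rw [pow_succ, Matrix.mul_apply]
    rw [Finset.sum_comm]
    simp_rw [← Finset.mul_sum, tm_rowsum hP1 hpol1, mul_one]
    exact ih s

include hP0 hP1 hpol0 hpol1 in
lemma tmpow_le_one (t : ℕ) (s s' : S) : (transMat P pol ^ t) s s' ≤ 1 := by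
  rw [← tmpow_rowsum hP0 hP1 hpol0 hpol1 t s]
  exact Finset.single_le_sum (fun j _ => tmpow_nonneg hP0 hpol0 t s j) (Finset.mem_univ s')

end

lemma summable_pow_mul {γ : ℝ} (hγ0 : 0 < γ) (hγ1 : γ < 1) {u : ℕ → ℝ} {B : ℝ}
    (hu : ∀ t, |u t| ≤ B) : Summable (fun t => γ ^ t * u t) := by
  apply Summable.of_norm_bounded
    ((summable_geometric_of_lt_one hγ0.le hγ1).mul_left B)
  intro t
  rw [Real.norm_eq_abs, abs_mul, abs_pow, abs_of_pos hγ0]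
  calc γ ^ t * |u t| ≤ γ ^ t * B := by
        exact mul_le_mul_of_nonneg_left (hu t) (by positivity)
    _ = B * γ ^ t := mul_comm _ _

lemma abs_row_dot_le {S : Type*} [Fintype S] {M : S → ℝ} {c : S → ℝ}
    (hM0 : ∀ s, 0 ≤ M s) (hM1 : ∀ s, M s ≤ 1) :
    |∑ s, M s * c s| ≤ ∑ s, |c s| := by
  calc |∑ s, M s * c s| ≤ ∑ s, |M s * c s| := Finset.abs_sum_le_sum_abs _ _
    _ ≤ ∑ s, |c s| := Finset.sum_le_sum fun s _ => by
        rw [abs_mul, abs_of_nonneg (hM0 s)]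
        calc M s * |c s| ≤ 1 * |c s| := mul_le_mul_of_nonneg_right (hM1 s) (abs_nonneg _)
          _ = |c s| := one_mul _

lemma abs_dot_le' {S : Type*} [Fintype S] {M c : S → ℝ}
    (hM0 : ∀ s, 0 ≤ M s) (hM1 : ∀ s, M s ≤ 1) :
    |∑ s, c s * M s| ≤ ∑ s, |c s| := by
  calc |∑ s, c s * M s| ≤ ∑ s, |c s * M s| := Finset.abs_sum_le_sum_abs _ _
    _ ≤ ∑ s, |c s| := Finset.sum_le_sum fun s _ => by
        rw [abs_mul, abs_of_nonneg (hM0 s)]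
        calc |c s| * M s ≤ |c s| * 1 := mul_le_mul_of_nonneg_left (hM1 s) (abs_nonneg _)
          _ = |c s| := mul_one _

section aux1
variable {S A : Type*} [Fintype S] [DecidableEq S] [Fintype A]
variable {P : S → A → S → ℝ} (hP0 : ∀ s a s', 0 ≤ P s a s') (hP1 : ∀ s a, ∑ s', P s a s' = 1)
variable {γ : ℝ} (hγ0 : 0 < γ) (hγ1 : γ < 1)

include hP0 hP1 hγ0 hγ1

/-- Summability of value-type series. -/
lemma summable_val {pol : S → A → ℝ} (hpol0 : ∀ s a, 0 ≤ pol s a)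
    (hpol1 : ∀ s, ∑ a, pol s a = 1) (c : S → ℝ) (s : S) :
    Summable (fun t => γ ^ t * ∑ s', (transMat P pol ^ t) s s' * c s') :=
  summable_pow_mul hγ0 hγ1 (B := ∑ s', |c s'|) (fun t =>
    abs_row_dot_le (fun s' => tmpow_nonneg hP0 hpol0 t s s')
      (fun s' => tmpow_le_one hP0 hP1 hpol0 hpol1 t s s'))

/-- Summability of visitation-type series. -/
lemma summable_vis {pol : S → A → ℝ} (hpol0 : ∀ s a, 0 ≤ pol s a)
    (hpol1 : ∀ s, ∑ a, pol s a = 1) (ρ0 : S → ℝ) (s : S) :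
    Summable (fun t => γ ^ t * ∑ s0, ρ0 s0 * (transMat P pol ^ t) s0 s) :=
  summable_pow_mul hγ0 hγ1 (B := ∑ s0, |ρ0 s0|) (fun t =>
    abs_dot_le' (fun s0 => tmpow_nonneg hP0 hpol0 t s0 s)
      (fun s0 => tmpow_le_one hP0 hP1 hpol0 hpol1 t s0 s))

/-- Performance difference: `V' - V` as discounted sum of expected advantages under `pol'`. -/
lemma pdiff (C : S → A → ℝ)
    {pol : S → A → ℝ} (hpol0 : ∀ s a, 0 ≤ pol s a) (hpol1 : ∀ s, ∑ a, pol s a = 1)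
    {pol' : S → A → ℝ} (hpol'0 : ∀ s a, 0 ≤ pol' s a) (hpol'1 : ∀ s, ∑ a, pol' s a = 1)
    (s : S) :
    Vfun P γ C pol' s - Vfun P γ C pol s
      = ∑' t : ℕ, γ ^ t * ∑ s', (transMat P pol' ^ t) s s' *
          ((∑ a, pol' s' a * C s' a)
            + γ * (∑ s'', transMat P pol' s' s'' * Vfun P γ C pol s'')
            - Vfun P γ C pol s') := by
  symm
  set M' := transMat P pol' with hM'
  set V : S → ℝ := Vfun P γ C pol with hV
  set c' : S → ℝ := fun s' => ∑ a, pol' s' a * C s' a with hc'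
  set Af : ℕ → ℝ := fun t => γ ^ t * ∑ s', (M' ^ t) s s' * c' s' with hAf
  set w : ℕ → ℝ := fun t => γ ^ t * ∑ s'', (M' ^ t) s s'' * V s'' with hw
  have key : ∀ t : ℕ, γ ^ t * ∑ s', (M' ^ t) s s' *
        (c' s' + γ * (∑ s'', M' s' s'' * V s'') - V s')
      = Af t + w (t + 1) - w t := by
    intro t
    have hmid : ∑ s', (M' ^ t) s s' * (γ * ∑ s'', M' s' s'' * V s'')
        = γ * ∑ s'', (M' ^ (t+1)) s s'' * V s'' := by
      calc ∑ s', (M' ^ t) s s' * (γ * ∑ s'', M' s' s'' * V s'')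
          = ∑ s', ∑ s'', γ * ((M' ^ t) s s' * (M' s' s'' * V s'')) := by
            refine Finset.sum_congr rfl fun s' _ => ?_
            rw [Finset.mul_sum, Finset.mul_sum]
            exact Finset.sum_congr rfl fun s'' _ => by ring
        _ = γ * ∑ s'', (∑ s', (M' ^ t) s s' * M' s' s'') * V s'' := by
            rw [Finset.sum_comm, Finset.mul_sum]
            refine Finset.sum_congr rfl fun s'' _ => ?_
            rw [Finset.sum_mul, Finset.mul_sum]
            exact Finset.sum_congr rfl fun s' _ => by ring
        _ = γ * ∑ s'', (M' ^ (t+1)) s s'' * V s'' := by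
            simp_rw [pow_succ, Matrix.mul_apply]
    have hsplit : ∑ s', (M' ^ t) s s' * (c' s' + γ * (∑ s'', M' s' s'' * V s'') - V s')
        = (∑ s', (M' ^ t) s s' * c' s')
          + (∑ s', (M' ^ t) s s' * (γ * ∑ s'', M' s' s'' * V s''))
          - ∑ s', (M' ^ t) s s' * V s' := by
      rw [← Finset.sum_add_distrib, ← Finset.sum_sub_distrib]
      exact Finset.sum_congr rfl fun s' _ => by ring
    rw [hsplit, hmid]
    simp only [hAf, hw]
    ring
  have hAs : Summable Af := summable_val hP0 hP1 hγ0 hγ1 hpol'0 hpol'1 c' s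
  have hws : Summable w := summable_val hP0 hP1 hγ0 hγ1 hpol'0 hpol'1 V s
  have hBs : Summable (fun t => w (t + 1)) := (summable_nat_add_iff 1).2 hws
  have hw0 : w 0 = V s := by
    simp [hw, Matrix.one_apply]
  have hV' : Vfun P γ C pol' s = ∑' t, Af t := rfl
  calc ∑' t : ℕ, γ ^ t * ∑ s', (M' ^ t) s s' *
          (c' s' + γ * (∑ s'', M' s' s'' * V s'') - V s')
      = ∑' t : ℕ, (Af t + w (t + 1) - w t) := tsum_congr key
    _ = (∑' t, Af t) + (∑' t, w (t + 1)) - ∑' t, w t := by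
        rw [Summable.tsum_sub (hAs.add hBs) hws, Summable.tsum_add hAs hBs]
    _ = Vfun P γ C pol' s - V s := by
        have h0 := Summable.tsum_eq_zero_add hws
        rw [← hV', hw0] at *
        linarith [h0]
end aux1

section aux2
variable {S A : Type*} [Fintype S] [DecidableEq S] [Fintype A]
variable {P : S → A → S → ℝ} (hP0 : ∀ s a s', 0 ≤ P s a s') (hP1 : ∀ s a, ∑ s', P s a s' = 1)
variable {γ : ℝ} (hγ0 : 0 < γ) (hγ1 : γ < 1)

include hP0 hP1 hγ0 hγ1

/-- Recursion for the discounted visitation distribution. -/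
lemma dvisit_rec (ρ0 : S → ℝ) {pol : S → A → ℝ} (hpol0 : ∀ s a, 0 ≤ pol s a)
    (hpol1 : ∀ s, ∑ a, pol s a = 1) (s : S) :
    dVisit P γ ρ0 pol s
      = (1 - γ) * ρ0 s + γ * ∑ s'', dVisit P γ ρ0 pol s'' * transMat P pol s'' s := by
  set M := transMat P pol with hM
  set y : ℕ → ℝ := fun t => γ ^ t * ∑ s0, ρ0 s0 * (M ^ t) s0 s with hy
  have hys : Summable y := summable_vis hP0 hP1 hγ0 hγ1 hpol0 hpol1 ρ0 s
  have hy0 : y 0 = ρ0 s := by simp [hy, Matrix.one_apply]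
  have hstep : ∀ t : ℕ, y (t + 1)
      = γ * ∑ s'', ((γ ^ t * ∑ s0, ρ0 s0 * (M ^ t) s0 s'') * M s'' s) := by
    intro t
    simp only [hy]
    calc γ ^ (t+1) * ∑ s0, ρ0 s0 * (M ^ (t+1)) s0 s
        = γ ^ (t+1) * ∑ s0, ∑ s'', ρ0 s0 * ((M ^ t) s0 s'' * M s'' s) := by
          congr 1
          refine Finset.sum_congr rfl fun s0 _ => ?_
          rw [pow_succ, Matrix.mul_apply, Finset.mul_sum]
      _ = γ ^ (t+1) * ∑ s'', ∑ s0, ρ0 s0 * ((M ^ t) s0 s'' * M s'' s) := by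
          rw [Finset.sum_comm]
      _ = γ * ∑ s'', ((γ ^ t * ∑ s0, ρ0 s0 * (M ^ t) s0 s'') * M s'' s) := by
          simp only [Finset.mul_sum, Finset.sum_mul]
          refine Finset.sum_congr rfl fun s'' _ => Finset.sum_congr rfl fun s0 _ => by ring
  have hsum_inner : ∀ s'' : S,
      Summable (fun t => (γ ^ t * ∑ s0, ρ0 s0 * (M ^ t) s0 s'') * M s'' s) :=
    fun s'' => (summable_vis hP0 hP1 hγ0 hγ1 hpol0 hpol1 ρ0 s'').mul_right _
  have htail : ∑' t : ℕ, y (t + 1)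
      = γ * ∑ s'', (∑' t : ℕ, γ ^ t * ∑ s0, ρ0 s0 * (M ^ t) s0 s'') * M s'' s := by
    calc ∑' t : ℕ, y (t + 1)
        = ∑' t : ℕ, γ * ∑ s'', ((γ ^ t * ∑ s0, ρ0 s0 * (M ^ t) s0 s'') * M s'' s) :=
          tsum_congr hstep
      _ = γ * ∑' t : ℕ, ∑ s'', ((γ ^ t * ∑ s0, ρ0 s0 * (M ^ t) s0 s'') * M s'' s) :=
          tsum_mul_left
      _ = γ * ∑ s'', ∑' t : ℕ, ((γ ^ t * ∑ s0, ρ0 s0 * (M ^ t) s0 s'') * M s'' s) := by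
          rw [Summable.tsum_finsetSum (fun s'' _ => hsum_inner s'')]
      _ = γ * ∑ s'', (∑' t : ℕ, γ ^ t * ∑ s0, ρ0 s0 * (M ^ t) s0 s'') * M s'' s := by
          congr 1
          exact Finset.sum_congr rfl fun s'' _ => tsum_mul_right
  have hz := Summable.tsum_eq_zero_add hys
  show (1 - γ) * ∑' t, y t = _
  rw [hz, hy0, htail, mul_add]
  congr 1
  simp only [dVisit, ← hM]
  simp only [Finset.mul_sum]
  exact Finset.sum_congr rfl fun s'' _ => by ring

/-- Nonnegativity of the visitation distribution. -/
lemma dvisit_nonneg (ρ0 : S → ℝ) (hρ0 : ∀ s, 0 ≤ ρ0 s) {pol : S → A → ℝ}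
    (hpol0 : ∀ s a, 0 ≤ pol s a) (s : S) : 0 ≤ dVisit P γ ρ0 pol s := by
  apply mul_nonneg (by linarith)
  apply tsum_nonneg
  intro t
  apply mul_nonneg (by positivity)
  exact Finset.sum_nonneg fun s0 _ =>
    mul_nonneg (hρ0 s0) (tmpow_nonneg hP0 hpol0 t s0 s)

/-- The visitation distribution sums to 1. -/
lemma dvisit_sum_one (ρ0 : S → ℝ) (hρ1 : ∑ s, ρ0 s = 1) {pol : S → A → ℝ}
    (hpol0 : ∀ s a, 0 ≤ pol s a) (hpol1 : ∀ s, ∑ a, pol s a = 1) :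
    ∑ s, dVisit P γ ρ0 pol s = 1 := by
  unfold dVisit
  rw [← Finset.mul_sum]
  rw [← Summable.tsum_finsetSum (fun s _ => summable_vis hP0 hP1 hγ0 hγ1 hpol0 hpol1 ρ0 s)]
  have h1 : ∀ t : ℕ, ∑ s, γ ^ t * ∑ s0, ρ0 s0 * (transMat P pol ^ t) s0 s = γ ^ t := by
    intro t
    rw [← Finset.mul_sum, Finset.sum_comm]
    simp_rw [← Finset.mul_sum, tmpow_rowsum hP0 hP1 hpol0 hpol1, mul_one, hρ1, mul_one]
  rw [tsum_congr h1, tsum_geometric_of_lt_one (by linarith) hγ1]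
  rw [mul_inv_cancel₀ (by linarith : (1:ℝ) - γ ≠ 0)]

/-- The key return-difference identity. -/
lemma jret_diff (ρ0 : S → ℝ) (C : S → A → ℝ)
    {pol : S → A → ℝ} (hpol0 : ∀ s a, 0 ≤ pol s a) (hpol1 : ∀ s, ∑ a, pol s a = 1)
    {pol' : S → A → ℝ} (hpol'0 : ∀ s a, 0 ≤ pol' s a) (hpol'1 : ∀ s, ∑ a, pol' s a = 1) :
    (1 - γ) * (Jret P γ ρ0 C pol' - Jret P γ ρ0 C pol)
      = ∑ s, dVisit P γ ρ0 pol' s *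
          ((∑ a, pol' s a * C s a)
            + γ * (∑ s'', transMat P pol' s s'' * Vfun P γ C pol s'')
            - Vfun P γ C pol s) := by
  set M' := transMat P pol' with hM'
  set g : S → ℝ := fun s =>
    (∑ a, pol' s a * C s a)
      + γ * (∑ s'', M' s s'' * Vfun P γ C pol s'') - Vfun P γ C pol s with hg
  have hsumv : ∀ s0 : S, Summable (fun t => γ ^ t * ∑ s, (M' ^ t) s0 s * g s) :=
    fun s0 => summable_val hP0 hP1 hγ0 hγ1 hpol'0 hpol'1 g s0
  have hJ : Jret P γ ρ0 C pol' - Jret P γ ρ0 C pol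
      = ∑' t : ℕ, ∑ s0, ρ0 s0 * (γ ^ t * ∑ s, (M' ^ t) s0 s * g s) := by
    calc Jret P γ ρ0 C pol' - Jret P γ ρ0 C pol
        = ∑ s0, ρ0 s0 * (Vfun P γ C pol' s0 - Vfun P γ C pol s0) := by
          unfold Jret
          rw [← Finset.sum_sub_distrib]
          exact Finset.sum_congr rfl fun s0 _ => by ring
      _ = ∑ s0, ρ0 s0 * ∑' t : ℕ, γ ^ t * ∑ s, (M' ^ t) s0 s * g s := by
          exact Finset.sum_congr rfl fun s0 _ => by
            rw [pdiff hP0 hP1 hγ0 hγ1 C hpol0 hpol1 hpol'0 hpol'1 s0]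
      _ = ∑ s0, ∑' t : ℕ, ρ0 s0 * (γ ^ t * ∑ s, (M' ^ t) s0 s * g s) := by
          exact Finset.sum_congr rfl fun s0 _ => tsum_mul_left.symm
      _ = ∑' t : ℕ, ∑ s0, ρ0 s0 * (γ ^ t * ∑ s, (M' ^ t) s0 s * g s) := by
          rw [Summable.tsum_finsetSum (fun s0 _ => (hsumv s0).mul_left (ρ0 s0))]
  have hswap : ∀ t : ℕ, ∑ s0, ρ0 s0 * (γ ^ t * ∑ s, (M' ^ t) s0 s * g s)
      = ∑ s, (γ ^ t * ∑ s0, ρ0 s0 * (M' ^ t) s0 s) * g s := by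
    intro t
    calc ∑ s0, ρ0 s0 * (γ ^ t * ∑ s, (M' ^ t) s0 s * g s)
        = ∑ s0, ∑ s, γ ^ t * (ρ0 s0 * ((M' ^ t) s0 s * g s)) := by
          simp only [Finset.mul_sum]
          exact Finset.sum_congr rfl fun s0 _ => Finset.sum_congr rfl fun s _ => by ring
      _ = ∑ s, ∑ s0, γ ^ t * (ρ0 s0 * ((M' ^ t) s0 s * g s)) := Finset.sum_comm
      _ = ∑ s, (γ ^ t * ∑ s0, ρ0 s0 * (M' ^ t) s0 s) * g s := by
          simp only [Finset.mul_sum, Finset.sum_mul]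
          exact Finset.sum_congr rfl fun s _ => Finset.sum_congr rfl fun s0 _ => by ring
  have hRHS : ∑ s, dVisit P γ ρ0 pol' s * g s
      = (1 - γ) * ∑' t : ℕ, ∑ s, (γ ^ t * ∑ s0, ρ0 s0 * (M' ^ t) s0 s) * g s := by
    calc ∑ s, dVisit P γ ρ0 pol' s * g s
        = ∑ s, (1 - γ) * ∑' t : ℕ, (γ ^ t * ∑ s0, ρ0 s0 * (M' ^ t) s0 s) * g s := by
          refine Finset.sum_congr rfl fun s _ => ?_
          unfold dVisit
          rw [mul_assoc]
          congr 1
          exact tsum_mul_right.symm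
      _ = (1 - γ) * ∑ s, ∑' t : ℕ, (γ ^ t * ∑ s0, ρ0 s0 * (M' ^ t) s0 s) * g s := by
          rw [Finset.mul_sum]
      _ = (1 - γ) * ∑' t : ℕ, ∑ s, (γ ^ t * ∑ s0, ρ0 s0 * (M' ^ t) s0 s) * g s := by
          congr 1
          rw [Summable.tsum_finsetSum (fun s _ =>
            (summable_vis hP0 hP1 hγ0 hγ1 hpol'0 hpol'1 ρ0 s).mul_right (g s))]
  rw [hJ, hRHS, tsum_congr hswap]
end aux2

section aux3
variable {S A : Type*} [Fintype S] [DecidableEq S] [Fintype A]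

/-- Expected advantage under `pol'` in terms of value functions. -/
lemma g_eq {P : S → A → S → ℝ} (γ : ℝ) (C : S → A → ℝ) (pol : S → A → ℝ)
    {pol' : S → A → ℝ} (hpol'1 : ∀ s, ∑ a, pol' s a = 1) (s : S) :
    ∑ a, pol' s a * Adv P γ C pol s a
      = (∑ a, pol' s a * C s a)
        + γ * (∑ s'', transMat P pol' s s'' * Vfun P γ C pol s'')
        - Vfun P γ C pol s := by
  unfold Adv Qfun
  have hsplit : ∑ a, pol' s a * (C s a + γ * (∑ s', P s a s' * Vfun P γ C pol s')
        - Vfun P γ C pol s)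
      = (∑ a, pol' s a * C s a)
        + (∑ a, pol' s a * (γ * ∑ s', P s a s' * Vfun P γ C pol s'))
        - ∑ a, pol' s a * Vfun P γ C pol s := by
    rw [← Finset.sum_add_distrib, ← Finset.sum_sub_distrib]
    exact Finset.sum_congr rfl fun a _ => by ring
  rw [hsplit]
  congr 1
  · congr 1
    calc ∑ a, pol' s a * (γ * ∑ s', P s a s' * Vfun P γ C pol s')
        = ∑ a, ∑ s', γ * (pol' s a * (P s a s' * Vfun P γ C pol s')) := by
          simp only [Finset.mul_sum]
          exact Finset.sum_congr rfl fun a _ => Finset.sum_congr rfl fun s' _ => by ring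
      _ = ∑ s', ∑ a, γ * (pol' s a * (P s a s' * Vfun P γ C pol s')) := Finset.sum_comm
      _ = γ * ∑ s'', transMat P pol' s s'' * Vfun P γ C pol s'' := by
          unfold transMat
          simp only [Finset.mul_sum, Finset.sum_mul]
          exact Finset.sum_congr rfl fun s' _ => Finset.sum_congr rfl fun a _ => by ring
  · rw [← Finset.sum_mul, hpol'1, one_mul]
end aux3

/-- min-cost per-step worst-case bound. -/
theorem min_cost_step_worst_case {S A : Type*} [Fintype S] [DecidableEq S] [Fintype A] [Nonempty S] [Nonempty A]
    (P : S → A → S → ℝ) (hP0 : ∀ s a s', 0 ≤ P s a s') (hP1 : ∀ s a, ∑ s', P s a s' = 1)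
    (γ : ℝ) (hγ0 : 0 < γ) (hγ1 : γ < 1)
    (ρ0 : S → ℝ) (hρ0 : ∀ s, 0 ≤ ρ0 s) (hρ1 : ∑ s, ρ0 s = 1)
    (δ : ℝ) (hδ : 0 < δ) (C : S → A → ℝ)
    (pol : S → A → ℝ) (hpol0 : ∀ s a, 0 ≤ pol s a) (hpol1 : ∀ s, ∑ a, pol s a = 1) (pol' : S → A → ℝ) (hpol'0 : ∀ s a, 0 ≤ pol' s a) (hpol'1 : ∀ s, ∑ a, pol' s a = 1)
    (habs : ∀ s a, pol s a = 0 → pol' s a = 0)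
    (hKL : avgKL P γ ρ0 pol' pol ≤ δ)
    (hA : surrAdv P γ ρ0 C pol pol' ≤ 0) :
    Jret P γ ρ0 C pol' - Jret P γ ρ0 C pol ≤
      Real.sqrt (2 * δ) * γ * epsAdv P γ C pol pol' / (1 - γ) ^ 2 := by
  have h1γ : (0:ℝ) < 1 - γ := by linarith
  set M : Matrix S S ℝ := transMat P pol with hM
  set M' : Matrix S S ℝ := transMat P pol' with hM'
  set d : S → ℝ := dVisit P γ ρ0 pol with hd
  set d' : S → ℝ := dVisit P γ ρ0 pol' with hd'
  set g : S → ℝ := fun s => ∑ a, pol' s a * Adv P γ C pol s a with hg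
  set ε : ℝ := epsAdv P γ C pol pol' with hε
  -- epsilon facts
  have hεs : ∀ s, |g s| ≤ ε := by
    intro s
    show |∑ a, pol' s a * Adv P γ C pol s a| ≤ ε
    rw [hε]
    show _ ≤ Finset.univ.sup' Finset.univ_nonempty fun s => |∑ a, pol' s a * Adv P γ C pol s a|
    exact Finset.le_sup' (fun s => |∑ a, pol' s a * Adv P γ C pol s a|) (Finset.mem_univ s)
  have hε0 : 0 ≤ ε := le_trans (abs_nonneg _) (hεs (Classical.arbitrary S))
  -- performance difference
  have hjd : (1 - γ) * (Jret P γ ρ0 C pol' - Jret P γ ρ0 C pol) = ∑ s, d' s * g s := by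
    rw [jret_diff hP0 hP1 hγ0 hγ1 ρ0 C hpol0 hpol1 hpol'0 hpol'1]
    exact Finset.sum_congr rfl fun s _ =>
      congrArg (fun x => d' s * x) (g_eq (P := P) γ C pol hpol'1 s).symm
  have hdg : ∑ s, d s * g s ≤ 0 := hA
  -- recursion for the difference of visitation distributions
  have hrec : ∀ s, d' s - d s
      = γ * (∑ s'', (d' s'' - d s'') * M' s'' s)
        + γ * ∑ s'', d s'' * (M' s'' s - M s'' s) := by
    intro s
    rw [hd', hd, dvisit_rec hP0 hP1 hγ0 hγ1 ρ0 hpol'0 hpol'1 s,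
      dvisit_rec hP0 hP1 hγ0 hγ1 ρ0 hpol0 hpol1 s]
    simp only [sub_mul, mul_sub, Finset.sum_sub_distrib, Finset.mul_sum]
    ring
  -- nonnegativity and total mass
  have hd0 : ∀ s, 0 ≤ d s := fun s => dvisit_nonneg hP0 hP1 hγ0 hγ1 ρ0 hρ0 hpol0 s
  have hdsum : ∑ s, d s = 1 := dvisit_sum_one hP0 hP1 hγ0 hγ1 ρ0 hρ1 hpol0 hpol1
  -- total-variation bound on row difference
  set tv : S → ℝ := fun s => ∑ a, |pol' s a - pol s a| with htv
  have htv2 : ∀ s'' : S, ∑ s, |M' s'' s - M s'' s| ≤ tv s'' := by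
    intro s''
    have hdiff : ∀ s, M' s'' s - M s'' s = ∑ a, (pol' s'' a - pol s'' a) * P s'' a s := by
      intro s
      rw [hM', hM]
      unfold transMat
      rw [← Finset.sum_sub_distrib]
      exact Finset.sum_congr rfl fun a _ => by ring
    calc ∑ s, |M' s'' s - M s'' s|
        ≤ ∑ s, ∑ a, |pol' s'' a - pol s'' a| * P s'' a s := by
          refine Finset.sum_le_sum fun s _ => ?_
          rw [hdiff s]
          refine (Finset.abs_sum_le_sum_abs _ _).trans ?_
          refine Finset.sum_le_sum fun a _ => ?_
          rw [abs_mul, abs_of_nonneg (hP0 s'' a s)]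
      _ = ∑ a, |pol' s'' a - pol s'' a| * ∑ s, P s'' a s := by
          rw [Finset.sum_comm]
          exact Finset.sum_congr rfl fun a _ => (Finset.mul_sum _ _ _).symm
      _ = tv s'' := by
          simp only [hP1, mul_one, htv]
  -- ℓ¹ bound on visitation shift
  set N : ℝ := ∑ s, |d' s - d s| with hN
  have hNb : (1 - γ) * N ≤ γ * ∑ s, d s * tv s := by
    have hstep : N ≤ γ * N + γ * ∑ s'', d s'' * tv s'' := by
      calc N = ∑ s, |d' s - d s| := hN
        _ ≤ ∑ s, (γ * (∑ s'', |d' s'' - d s''| * M' s'' s)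
              + γ * ∑ s'', d s'' * |M' s'' s - M s'' s|) := by
            refine Finset.sum_le_sum fun s _ => ?_
            rw [hrec s]
            refine (abs_add_le _ _).trans (add_le_add ?_ ?_)
            · rw [abs_mul, abs_of_pos hγ0]
              refine mul_le_mul_of_nonneg_left ?_ hγ0.le
              refine (Finset.abs_sum_le_sum_abs _ _).trans ?_
              refine Finset.sum_le_sum fun s'' _ => ?_
              rw [abs_mul, abs_of_nonneg (tm_nonneg hP0 hpol'0 s'' s)]
            · rw [abs_mul, abs_of_pos hγ0]
              refine mul_le_mul_of_nonneg_left ?_ hγ0.le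
              refine (Finset.abs_sum_le_sum_abs _ _).trans ?_
              refine Finset.sum_le_sum fun s'' _ => ?_
              rw [abs_mul, abs_of_nonneg (hd0 s'')]
        _ = γ * (∑ s, ∑ s'', |d' s'' - d s''| * M' s'' s)
              + γ * ∑ s, ∑ s'', d s'' * |M' s'' s - M s'' s| := by
            rw [Finset.sum_add_distrib, ← Finset.mul_sum, ← Finset.mul_sum]
        _ ≤ γ * N + γ * ∑ s'', d s'' * tv s'' := by
            refine add_le_add (mul_le_mul_of_nonneg_left ?_ hγ0.le)
              (mul_le_mul_of_nonneg_left ?_ hγ0.le)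
            · rw [Finset.sum_comm]
              have : ∀ s'' : S, ∑ s, |d' s'' - d s''| * M' s'' s = |d' s'' - d s''| := by
                intro s''
                rw [← Finset.mul_sum, tm_rowsum hP1 hpol'1 s'', mul_one]
              rw [Finset.sum_congr rfl fun s'' _ => this s'']
            · rw [Finset.sum_comm]
              refine Finset.sum_le_sum fun s'' _ => ?_
              rw [← Finset.mul_sum]
              exact mul_le_mul_of_nonneg_left (htv2 s'') (hd0 s'')
    linarith
  -- Pinsker + Cauchy-Schwarz
  have hKL0 : ∀ s, 0 ≤ klState pol' pol s := fun s =>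
    kl_nonneg' (fun a => pol' s a) (fun a => pol s a) (hpol'0 s) (hpol0 s)
      (hpol'1 s) (hpol1 s) (habs s)
  have hpins : ∀ s, tv s ≤ Real.sqrt (2 * klState pol' pol s) := by
    intro s
    have h := pinsker_finset (fun a => pol' s a) (fun a => pol s a) (hpol'0 s) (hpol0 s)
      (hpol'1 s) (hpol1 s) (habs s)
    have htv0 : 0 ≤ tv s := Finset.sum_nonneg fun a _ => abs_nonneg _
    calc tv s = Real.sqrt ((tv s) ^ 2) := (Real.sqrt_sq htv0).symm
      _ ≤ Real.sqrt (2 * klState pol' pol s) := Real.sqrt_le_sqrt h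
  have hCS : ∑ s, d s * tv s ≤ Real.sqrt (2 * δ) := by
    have step1 : ∑ s, d s * tv s ≤ ∑ s, d s * Real.sqrt (2 * klState pol' pol s) :=
      Finset.sum_le_sum fun s _ => mul_le_mul_of_nonneg_left (hpins s) (hd0 s)
    set X : ℝ := ∑ s, d s * Real.sqrt (2 * klState pol' pol s) with hX
    have hX0 : 0 ≤ X := Finset.sum_nonneg fun s _ =>
      mul_nonneg (hd0 s) (Real.sqrt_nonneg _)
    have step2 : X ^ 2 ≤ 2 * δ := by
      have hCS2 := Finset.sum_mul_sq_le_sq_mul_sq Finset.univ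
        (fun s => Real.sqrt (d s))
        (fun s => Real.sqrt (d s) * Real.sqrt (2 * klState pol' pol s))
      have hfg : ∀ s : S, Real.sqrt (d s) * (Real.sqrt (d s) * Real.sqrt (2 * klState pol' pol s))
          = d s * Real.sqrt (2 * klState pol' pol s) := by
        intro s
        rw [← mul_assoc, Real.mul_self_sqrt (hd0 s)]
      have hf2 : ∀ s : S, Real.sqrt (d s) ^ 2 = d s := fun s => Real.sq_sqrt (hd0 s)
      have hg2 : ∀ s : S, (Real.sqrt (d s) * Real.sqrt (2 * klState pol' pol s)) ^ 2
          = d s * (2 * klState pol' pol s) := by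
        intro s
        rw [mul_pow, Real.sq_sqrt (hd0 s), Real.sq_sqrt (by linarith [hKL0 s] : 0 ≤ 2 * klState pol' pol s)]
      rw [Finset.sum_congr rfl fun s _ => hfg s] at hCS2
      rw [Finset.sum_congr rfl fun s _ => hf2 s] at hCS2
      rw [Finset.sum_congr rfl fun s _ => hg2 s] at hCS2
      rw [hdsum, one_mul] at hCS2
      refine hCS2.trans ?_
      have : ∑ s, d s * (2 * klState pol' pol s) = 2 * avgKL P γ ρ0 pol' pol := by
        unfold avgKL
        rw [Finset.mul_sum]
        exact Finset.sum_congr rfl fun s _ => by rw [hd]; ring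
      rw [this]
      linarith
    refine step1.trans ?_
    calc X = Real.sqrt (X ^ 2) := (Real.sqrt_sq hX0).symm
      _ ≤ Real.sqrt (2 * δ) := Real.sqrt_le_sqrt step2
  -- final chain
  have hfinal1 : (1 - γ) * (Jret P γ ρ0 C pol' - Jret P γ ρ0 C pol) ≤ N * ε := by
    rw [hjd]
    have hsplit : ∑ s, d' s * g s = ∑ s, d s * g s + ∑ s, (d' s - d s) * g s := by
      rw [← Finset.sum_add_distrib]
      exact Finset.sum_congr rfl fun s _ => by ring
    rw [hsplit]
    have h2 : ∑ s, (d' s - d s) * g s ≤ ∑ s, |d' s - d s| * ε := by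
      refine Finset.sum_le_sum fun s _ => ?_
      calc (d' s - d s) * g s ≤ |(d' s - d s) * g s| := le_abs_self _
        _ = |d' s - d s| * |g s| := abs_mul _ _
        _ ≤ |d' s - d s| * ε := mul_le_mul_of_nonneg_left (hεs s) (abs_nonneg _)
    have h3 : ∑ s, |d' s - d s| * ε = N * ε := by rw [hN, Finset.sum_mul]
    linarith
  have hN0 : 0 ≤ N := Finset.sum_nonneg fun s _ => abs_nonneg _
  rw [le_div_iff₀ (by positivity : (0:ℝ) < (1-γ)^2)]
  nlinarith [mul_le_mul_of_nonneg_left hfinal1 h1γ.le,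
             mul_le_mul_of_nonneg_right hNb hε0,
             mul_le_mul_of_nonneg_right hCS (mul_nonneg hγ0.le hε0)]
end

section
/- Min-cost stage reward-retention bound (Lemma A.3): in a finite discounted MDP, let δ > 0, g ∈ ℝ, n ≥ 1, let R : S → A → ℝ be a reward signal, and let π_0, π_1, …, π_n be policies such that for every i < n: (π_i s a = 0 → π_{i+1} s a = 0), D̄_KL(π_{i+1}‖π_i) ≤ δ, and the reward surrogate constraint J_R(π_i) + (1/(1−γ)) · 𝔸_R(π_i, π_{i+1}) ≥ g holds. Then J_R(π_n) ≥ g − (√(2δ) · γ / (1−γ)²) · ∑_{j=1}^{n} ε_R(π_{j−1}, π_j). -/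
open Real BigOperators

section ScalarIneq

noncomputable def gAux (x : ℝ) : ℝ := x * Real.log x - x + 1 - 3 * (x - 1) ^ 2 / (2 * (x + 2))
noncomputable def gAux' (x : ℝ) : ℝ := Real.log x - 3 * ((x - 1) * (x + 5)) / (2 * (x + 2) ^ 2)

lemma hasDerivAt_gAux {x : ℝ} (hx : 0 < x) : HasDerivAt gAux (gAux' x) x := by
  have hx2 : x + 2 ≠ 0 := by positivity
  have h1 : HasDerivAt (fun x : ℝ => x * Real.log x) (Real.log x + 1) x :=
    Real.hasDerivAt_mul_log hx.ne'
  have h2 : HasDerivAt (fun x : ℝ => 3 * (x - 1) ^ 2) (3 * (2 * (x - 1))) x := by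
    have : HasDerivAt (fun x : ℝ => (x - 1) ^ 2) (2 * (x - 1) ^ 1 * 1) x :=
      ((hasDerivAt_id x).sub_const 1).pow 2
    simpa using this.const_mul 3
  have h3 : HasDerivAt (fun x : ℝ => 2 * (x + 2)) 2 x := by
    simpa using ((hasDerivAt_id x).add_const 2).const_mul 2
  have h4 := (h2.div h3 (by positivity))
  have h5 := (h1.sub ((hasDerivAt_id x))).add_const 1
  have h6 := h5.sub h4
  refine (show HasDerivAt gAux _ x from h6).congr_deriv ?_
  unfold gAux'
  field_simp [gAux']
  ring

lemma hasDerivAt_gAux' {x : ℝ} (hx : 0 < x) : HasDerivAt gAux' (1 / x - 27 / (x + 2) ^ 3) x := by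
  have hx2 : (2 : ℝ) * (x + 2) ^ 2 ≠ 0 := by positivity
  have h1 : HasDerivAt Real.log (1 / x) x := by simpa [one_div] using Real.hasDerivAt_log hx.ne'
  have h2 : HasDerivAt (fun x : ℝ => 3 * ((x - 1) * (x + 5))) (3 * ((x + 5) + (x - 1))) x := by
    have := (((hasDerivAt_id x).sub_const 1).mul ((hasDerivAt_id x).add_const 5)).const_mul 3
    simpa [mul_comm, mul_add, add_comm] using this
  have h3 : HasDerivAt (fun x : ℝ => 2 * (x + 2) ^ 2) (2 * (2 * (x + 2))) x := by
    have : HasDerivAt (fun x : ℝ => (x + 2) ^ 2) (2 * (x + 2) ^ 1 * 1) x :=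
      ((hasDerivAt_id x).add_const 2).pow 2
    simpa using this.const_mul 2
  have h4 := h2.div h3 hx2
  have h6 := h1.sub h4
  refine (show HasDerivAt gAux' _ x from h6).congr_deriv ?_
  have hx0 : x ≠ 0 := hx.ne'
  have hx2' : x + 2 ≠ 0 := by positivity
  field_simp
  ring

lemma gAux_nonneg {x : ℝ} (hx : 0 < x) : 0 ≤ gAux x := by
  have hcont : ∀ y ∈ Set.Ioi (0:ℝ), ContinuousAt gAux y := fun y hy =>
    (hasDerivAt_gAux hy).continuousAt
  have hg'_mono : MonotoneOn gAux' (Set.Ioi (0:ℝ)) := by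
    apply monotoneOn_of_hasDerivWithinAt_nonneg (convex_Ioi 0)
      (fun y hy => ((hasDerivAt_gAux' hy).continuousAt).continuousWithinAt)
      (f' := fun y => 1 / y - 27 / (y + 2) ^ 3)
    · intro y hy
      rw [interior_Ioi] at hy
      exact (hasDerivAt_gAux' hy).hasDerivWithinAt
    · intro y hy
      rw [interior_Ioi] at hy
      have hy0 : (0:ℝ) < y := hy
      rw [sub_nonneg, div_le_div_iff₀ (by positivity) (by positivity)]
      nlinarith [sq_nonneg (y - 1), mul_nonneg (sq_nonneg (y - 1)) hy0.le]
  have hg'1 : gAux' 1 = 0 := by norm_num [gAux']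
  -- g' ≥ 0 on [1,∞), g' ≤ 0 on (0,1]
  have key : gAux 1 ≤ gAux x := by
    rcases le_total 1 x with h | h
    · have hmono : MonotoneOn gAux (Set.Ici (1:ℝ)) := by
        apply monotoneOn_of_hasDerivWithinAt_nonneg (convex_Ici 1)
          (fun y hy => ((hasDerivAt_gAux (lt_of_lt_of_le one_pos hy)).continuousAt).continuousWithinAt)
          (f' := gAux')
        · intro y hy
          rw [interior_Ici] at hy
          exact (hasDerivAt_gAux (lt_trans one_pos hy)).hasDerivWithinAt
        · intro y hy
          rw [interior_Ici] at hy
          rw [← hg'1]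
          exact hg'_mono (Set.mem_Ioi.2 one_pos) (Set.mem_Ioi.2 (lt_trans one_pos hy)) hy.le
      exact hmono (Set.mem_Ici.2 le_rfl) (Set.mem_Ici.2 h) h
    · have hanti : AntitoneOn gAux (Set.Ioc (0:ℝ) 1) := by
        apply antitoneOn_of_hasDerivWithinAt_nonpos (convex_Ioc 0 1)
          (fun y hy => ((hasDerivAt_gAux hy.1).continuousAt).continuousWithinAt)
          (f' := gAux')
        · intro y hy
          have : y ∈ Set.Ioc (0:ℝ) 1 := interior_subset hy
          exact (hasDerivAt_gAux this.1).hasDerivWithinAt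
        · intro y hy
          rw [interior_Ioc] at hy
          rw [← hg'1]
          exact hg'_mono (Set.mem_Ioi.2 hy.1) (Set.mem_Ioi.2 one_pos) hy.2.le
      exact hanti (Set.mem_Ioc.2 ⟨hx, h⟩) (Set.mem_Ioc.2 ⟨one_pos, le_rfl⟩) h
  have hg1 : gAux 1 = 0 := by norm_num [gAux]
  linarith

lemma key_scalar {p q : ℝ} (hp : 0 ≤ p) (hq : 0 ≤ q) (habs : q = 0 → p = 0) :
    3 * (p - q) ^ 2 / (2 * (p + 2 * q)) ≤ p * Real.log (p / q) - p + q := by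
  rcases eq_or_lt_of_le hq with hq0 | hq0
  · rw [← hq0] at habs ⊢
    simp [habs rfl]
  rcases eq_or_lt_of_le hp with hp0 | hp0
  · rw [← hp0]
    have : 3 * (0 - q) ^ 2 / (2 * (0 + 2 * q)) = 3 * q / 4 := by
      field_simp
      ring
    rw [this]
    simp only [zero_mul, zero_sub, neg_add_eq_sub, sub_zero]
    linarith
  have := gAux_nonneg (div_pos hp0 hq0)
  unfold gAux at this
  have h1 : q * (p / q * Real.log (p / q) - p / q + 1) = p * Real.log (p / q) - p + q := by
    field_simp
  have h2 : q * (3 * (p / q - 1) ^ 2 / (2 * (p / q + 2))) = 3 * (p - q) ^ 2 / (2 * (p + 2 * q)) := by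
    have hden : p + 2 * q ≠ 0 := by positivity
    field_simp
  nlinarith [mul_nonneg hq0.le this]

end ScalarIneq

lemma pinsker_fin {A : Type*} [Fintype A] (p q : A → ℝ)
    (hp0 : ∀ a, 0 ≤ p a) (hq0 : ∀ a, 0 ≤ q a)
    (hp1 : ∑ a, p a = 1) (hq1 : ∑ a, q a = 1)
    (habs : ∀ a, q a = 0 → p a = 0) :
    (∑ a, |p a - q a|) ^ 2 ≤ 2 * ∑ a, p a * Real.log (p a / q a) := by
  have hs : ∀ a : A, 0 ≤ p a + 2 * q a := fun a => by
    have := hp0 a; have := hq0 a; linarith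
  have cs := Finset.sum_mul_sq_le_sq_mul_sq Finset.univ
    (fun a => Real.sqrt (p a + 2 * q a))
    (fun a => |p a - q a| / Real.sqrt (p a + 2 * q a))
  have h1 : ∀ a : A, Real.sqrt (p a + 2 * q a) * (|p a - q a| / Real.sqrt (p a + 2 * q a))
      = |p a - q a| := by
    intro a
    rcases eq_or_lt_of_le (hs a) with h | h
    · have hpa : p a = 0 := by nlinarith [hp0 a, hq0 a]
      have hqa : q a = 0 := by nlinarith [hp0 a, hq0 a]
      simp [hpa, hqa]
    · rw [mul_div_cancel₀ _ (by positivity)]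
  have h2 : ∀ a : A, Real.sqrt (p a + 2 * q a) ^ 2 = p a + 2 * q a := fun a =>
    Real.sq_sqrt (hs a)
  have h3 : ∀ a : A, (|p a - q a| / Real.sqrt (p a + 2 * q a)) ^ 2
      = (p a - q a) ^ 2 / (p a + 2 * q a) := by
    intro a
    rw [div_pow, sq_abs, Real.sq_sqrt (hs a)]
  simp only [h1] at cs
  have e2 : ∑ a, Real.sqrt (p a + 2 * q a) ^ 2 = 3 := by
    simp only [h2]; rw [Finset.sum_add_distrib, hp1, ← Finset.mul_sum, hq1]; norm_num
  have e3 : ∑ a, (|p a - q a| / Real.sqrt (p a + 2 * q a)) ^ 2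
      = ∑ a, (p a - q a) ^ 2 / (p a + 2 * q a) := Finset.sum_congr rfl fun a _ => h3 a
  rw [e2, e3] at cs
  have key : ∑ a, (p a - q a) ^ 2 / (p a + 2 * q a)
      ≤ (2 / 3) * ∑ a, p a * Real.log (p a / q a) := by
    have hpt : ∀ a : A, (p a - q a) ^ 2 / (p a + 2 * q a)
        ≤ (2 / 3) * (p a * Real.log (p a / q a) - p a + q a) := by
      intro a
      have hks := key_scalar (hp0 a) (hq0 a) (habs a)
      have heq : (p a - q a) ^ 2 / (p a + 2 * q a)
          = (2 / 3) * (3 * (p a - q a) ^ 2 / (2 * (p a + 2 * q a))) := by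
        rcases eq_or_lt_of_le (hs a) with h | h
        · rw [← h]; simp
        · field_simp
      rw [heq]
      linarith
    calc ∑ a, (p a - q a) ^ 2 / (p a + 2 * q a)
        ≤ ∑ a, (2 / 3) * (p a * Real.log (p a / q a) - p a + q a) :=
          Finset.sum_le_sum fun a _ => hpt a
      _ = (2 / 3) * ∑ a, p a * Real.log (p a / q a) := by
          rw [← Finset.mul_sum]
          congr 1
          rw [Finset.sum_add_distrib, Finset.sum_sub_distrib, hp1, hq1]
          ring
  nlinarith [cs, key]

section Helpers
variable {S A : Type*} [Fintype S] [DecidableEq S] [Fintype A]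

lemma powEntry_nonneg {M : Matrix S S ℝ} (hM0 : ∀ s s', 0 ≤ M s s') (t : ℕ) :
    ∀ s s', 0 ≤ (M ^ t) s s' := by
  induction t with
  | zero => intro s s'; rw [pow_zero, Matrix.one_apply]; positivity
  | succ t ih =>
    intro s s'
    rw [pow_succ, Matrix.mul_apply]
    exact Finset.sum_nonneg fun u _ => mul_nonneg (ih s u) (hM0 u s')

lemma powRow_sum {M : Matrix S S ℝ} (hM1 : ∀ s, ∑ s', M s s' = 1) (t : ℕ) :
    ∀ s, ∑ s', (M ^ t) s s' = 1 := by
  induction t with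
  | zero => intro s; simp [Matrix.one_apply]
  | succ t ih =>
    intro s
    simp_rw [pow_succ, Matrix.mul_apply]
    rw [Finset.sum_comm]
    simp_rw [← Finset.mul_sum, hM1]
    simpa using ih s

lemma powEntry_le_one {M : Matrix S S ℝ} (hM0 : ∀ s s', 0 ≤ M s s')
    (hM1 : ∀ s, ∑ s', M s s' = 1) (t : ℕ) (s s' : S) : (M ^ t) s s' ≤ 1 := by
  rw [← powRow_sum hM1 t s]
  exact Finset.single_le_sum (fun u _ => powEntry_nonneg hM0 t s u) (Finset.mem_univ s')

lemma summable_geom_bound {γ : ℝ} (hγ0 : 0 ≤ γ) (hγ1 : γ < 1) (c : ℕ → ℝ) (C : ℝ)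
    (hc : ∀ t, |c t| ≤ C) : Summable (fun t => γ ^ t * c t) := by
  apply Summable.of_norm_bounded (g := fun t => C * γ ^ t)
    ((summable_geometric_of_lt_one hγ0 hγ1).mul_left C)
  intro t
  rw [Real.norm_eq_abs, abs_mul, abs_pow, abs_of_nonneg hγ0, mul_comm]
  exact mul_le_mul_of_nonneg_right (hc t) (pow_nonneg hγ0 t)

variable (P : S → A → S → ℝ) (γ : ℝ) (ρ0 : S → ℝ) (F : S → A → ℝ) (pol : S → A → ℝ)

lemma transMat_nonneg (hP0 : ∀ s a s', 0 ≤ P s a s') (hpol0 : ∀ s a, 0 ≤ pol s a) :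
    ∀ s s', 0 ≤ transMat P pol s s' := fun s s' =>
  Finset.sum_nonneg fun a _ => mul_nonneg (hpol0 s a) (hP0 s a s')

lemma transMat_rowsum (hP1 : ∀ s a, ∑ s', P s a s' = 1) (hpol1 : ∀ s, ∑ a, pol s a = 1) :
    ∀ s, ∑ s', transMat P pol s s' = 1 := by
  intro s
  unfold transMat
  rw [Finset.sum_comm]
  simp_rw [← Finset.mul_sum, hP1]
  simpa using hpol1 s

lemma summable_V (hM0 : ∀ s s', 0 ≤ transMat P pol s s')
    (hM1 : ∀ s, ∑ s', transMat P pol s s' = 1)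
    (hγ0 : 0 ≤ γ) (hγ1 : γ < 1) (s : S) :
    Summable (fun t : ℕ => γ ^ t * ∑ s', ((transMat P pol) ^ t) s s' * ∑ a, pol s' a * F s' a) := by
  apply summable_geom_bound hγ0 hγ1 _ (∑ s', |∑ a, pol s' a * F s' a|)
  intro t
  calc |∑ s', ((transMat P pol) ^ t) s s' * ∑ a, pol s' a * F s' a|
      ≤ ∑ s', |((transMat P pol) ^ t) s s' * ∑ a, pol s' a * F s' a| :=
        Finset.abs_sum_le_sum_abs _ _
    _ ≤ ∑ s', |∑ a, pol s' a * F s' a| := by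
        apply Finset.sum_le_sum
        intro s' _
        rw [abs_mul]
        apply mul_le_of_le_one_left (abs_nonneg _)
        rw [abs_of_nonneg (powEntry_nonneg hM0 t s s')]
        exact powEntry_le_one hM0 hM1 t s s'

lemma Vfun_rec (hM0 : ∀ s s', 0 ≤ transMat P pol s s')
    (hM1 : ∀ s, ∑ s', transMat P pol s s' = 1)
    (hγ0 : 0 ≤ γ) (hγ1 : γ < 1) (s : S) :
    Vfun P γ F pol s = (∑ a, pol s a * F s a)
      + γ * ∑ s', transMat P pol s s' * Vfun P γ F pol s' := by
  set M := transMat P pol with hM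
  have hsum : ∀ u : S, Summable
      (fun t : ℕ => γ ^ t * ∑ s', (M ^ t) u s' * ∑ a, pol s' a * F s' a) :=
    fun u => summable_V P γ F pol hM0 hM1 hγ0 hγ1 u
  have h0 : Vfun P γ F pol s
      = ∑' t : ℕ, γ ^ t * ∑ s', (M ^ t) s s' * ∑ a, pol s' a * F s' a := rfl
  rw [h0, Summable.tsum_eq_zero_add (hsum s)]
  have hzero : γ ^ 0 * ∑ s', (M ^ 0) s s' * ∑ a, pol s' a * F s' a
      = ∑ a, pol s a * F s a := by
    simp [Matrix.one_apply]
  have step : ∀ t : ℕ, γ ^ (t+1) * ∑ s', (M ^ (t+1)) s s' * ∑ a, pol s' a * F s' a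
      = γ * ∑ u, M s u * (γ ^ t * ∑ s', (M ^ t) u s' * ∑ a, pol s' a * F s' a) := by
    intro t
    have hentry : ∀ s', (M ^ (t+1)) s s' = ∑ u, M s u * (M ^ t) u s' := by
      intro s'; rw [pow_succ', Matrix.mul_apply]
    simp_rw [hentry, Finset.sum_mul]
    rw [Finset.sum_comm, Finset.mul_sum, Finset.mul_sum]
    apply Finset.sum_congr rfl
    intro u _
    simp_rw [Finset.mul_sum]
    apply Finset.sum_congr rfl
    intro i _
    apply Finset.sum_congr rfl
    intro x _
    ring
  rw [tsum_congr step, tsum_mul_left,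
    Summable.tsum_finsetSum (fun u (_ : u ∈ Finset.univ) => ((hsum u).mul_left (M s u)))]
  simp_rw [tsum_mul_left]
  rw [hzero]
  rfl


lemma summable_d (hM0 : ∀ s s', 0 ≤ transMat P pol s s')
    (hM1 : ∀ s, ∑ s', transMat P pol s s' = 1)
    (hγ0 : 0 ≤ γ) (hγ1 : γ < 1) (hρ0 : ∀ s, 0 ≤ ρ0 s) (hρ1 : ∑ s, ρ0 s = 1) (s : S) :
    Summable (fun t : ℕ => γ ^ t * ∑ s0, ρ0 s0 * ((transMat P pol) ^ t) s0 s) := by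
  apply summable_geom_bound hγ0 hγ1 _ 1
  intro t
  have h1 : ∀ s0 : S, ρ0 s0 * ((transMat P pol) ^ t) s0 s ≤ ρ0 s0 := fun s0 =>
    mul_le_of_le_one_right (hρ0 s0) (powEntry_le_one hM0 hM1 t s0 s)
  have h0 : (0:ℝ) ≤ ∑ s0, ρ0 s0 * ((transMat P pol) ^ t) s0 s :=
    Finset.sum_nonneg fun s0 _ => mul_nonneg (hρ0 s0) (powEntry_nonneg hM0 t s0 s)
  rw [abs_of_nonneg h0, ← hρ1]
  exact Finset.sum_le_sum fun s0 _ => h1 s0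

lemma dVisit_nonneg (hM0 : ∀ s s', 0 ≤ transMat P pol s s')
    (hγ0 : 0 ≤ γ) (hγ1 : γ < 1) (hρ0 : ∀ s, 0 ≤ ρ0 s) (s : S) :
    0 ≤ dVisit P γ ρ0 pol s := by
  apply mul_nonneg (by linarith)
  apply tsum_nonneg
  intro t
  apply mul_nonneg (pow_nonneg hγ0 t)
  exact Finset.sum_nonneg fun s0 _ => mul_nonneg (hρ0 s0) (powEntry_nonneg hM0 t s0 s)

lemma dVisit_rec (hM0 : ∀ s s', 0 ≤ transMat P pol s s')
    (hM1 : ∀ s, ∑ s', transMat P pol s s' = 1)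
    (hγ0 : 0 ≤ γ) (hγ1 : γ < 1) (hρ0 : ∀ s, 0 ≤ ρ0 s) (hρ1 : ∑ s, ρ0 s = 1) (s : S) :
    dVisit P γ ρ0 pol s = (1 - γ) * ρ0 s
      + γ * ∑ s1, dVisit P γ ρ0 pol s1 * transMat P pol s1 s := by
  set M := transMat P pol with hM
  have hsum : ∀ u : S, Summable (fun t : ℕ => γ ^ t * ∑ s0, ρ0 s0 * (M ^ t) s0 u) :=
    fun u => summable_d P γ ρ0 pol hM0 hM1 hγ0 hγ1 hρ0 hρ1 u
  have h0 : dVisit P γ ρ0 pol s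
      = (1 - γ) * ∑' t : ℕ, γ ^ t * ∑ s0, ρ0 s0 * (M ^ t) s0 s := rfl
  rw [h0, Summable.tsum_eq_zero_add (hsum s)]
  have hzero : γ ^ 0 * ∑ s0, ρ0 s0 * (M ^ 0) s0 s = ρ0 s := by
    simp [Matrix.one_apply]
  have step : ∀ t : ℕ, γ ^ (t+1) * ∑ s0, ρ0 s0 * (M ^ (t+1)) s0 s
      = γ * ∑ s1, (γ ^ t * ∑ s0, ρ0 s0 * (M ^ t) s0 s1) * M s1 s := by
    intro t
    have hentry : ∀ s0, (M ^ (t+1)) s0 s = ∑ s1, (M ^ t) s0 s1 * M s1 s := by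
      intro s0; rw [pow_succ, Matrix.mul_apply]
    simp_rw [hentry, Finset.mul_sum]
    rw [Finset.sum_comm]
    apply Finset.sum_congr rfl
    intro s1 _
    rw [Finset.sum_mul, Finset.mul_sum]
    apply Finset.sum_congr rfl
    intro s0 _
    ring
  rw [tsum_congr step, tsum_mul_left,
    Summable.tsum_finsetSum (fun s1 (_ : s1 ∈ Finset.univ) => ((hsum s1).mul_right (M s1 s)))]
  simp_rw [tsum_mul_right]
  rw [hzero]
  have hd : ∀ s1 : S, dVisit P γ ρ0 pol s1
      = (1 - γ) * ∑' t : ℕ, γ ^ t * ∑ s0, ρ0 s0 * (M ^ t) s0 s1 := fun s1 => rfl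
  rw [mul_add]
  congr 1
  simp_rw [hd, Finset.mul_sum]
  apply Finset.sum_congr rfl
  intro s1 _
  ring

lemma dVisit_sum_one (hM0 : ∀ s s', 0 ≤ transMat P pol s s')
    (hM1 : ∀ s, ∑ s', transMat P pol s s' = 1)
    (hγ0 : 0 ≤ γ) (hγ1 : γ < 1) (hρ0 : ∀ s, 0 ≤ ρ0 s) (hρ1 : ∑ s, ρ0 s = 1) :
    ∑ s, dVisit P γ ρ0 pol s = 1 := by
  set M := transMat P pol with hM
  have h0 : ∀ s : S, dVisit P γ ρ0 pol s
      = (1 - γ) * ∑' t : ℕ, γ ^ t * ∑ s0, ρ0 s0 * (M ^ t) s0 s := fun _ => rfl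
  simp_rw [h0]
  rw [← Finset.mul_sum,
    ← Summable.tsum_finsetSum (fun s (_ : s ∈ Finset.univ) => summable_d P γ ρ0 pol hM0 hM1 hγ0 hγ1 hρ0 hρ1 s)]
  have heq : ∀ t : ℕ, (∑ s, γ ^ t * ∑ s0, ρ0 s0 * (M ^ t) s0 s) = γ ^ t := by
    intro t
    rw [← Finset.mul_sum, Finset.sum_comm]
    simp_rw [← Finset.mul_sum, powRow_sum hM1 t]
    simp [hρ1]
  rw [tsum_congr heq, tsum_geometric_of_lt_one hγ0 hγ1]
  have hne : (1:ℝ) - γ ≠ 0 := by linarith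
  field_simp

lemma J_d (hM0 : ∀ s s', 0 ≤ transMat P pol s s')
    (hM1 : ∀ s, ∑ s', transMat P pol s s' = 1)
    (hγ0 : 0 ≤ γ) (hγ1 : γ < 1) (hρ0 : ∀ s, 0 ≤ ρ0 s) (hρ1 : ∑ s, ρ0 s = 1) :
    ∑ s, dVisit P γ ρ0 pol s * (∑ a, pol s a * F s a)
      = (1 - γ) * ∑ s0, ρ0 s0 * Vfun P γ F pol s0 := by
  set M := transMat P pol with hM
  have h0 : ∀ s : S, dVisit P γ ρ0 pol s
      = (1 - γ) * ∑' t : ℕ, γ ^ t * ∑ s0, ρ0 s0 * (M ^ t) s0 s := fun _ => rfl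
  have hV : ∀ s0 : S, Vfun P γ F pol s0
      = ∑' t : ℕ, γ ^ t * ∑ s', (M ^ t) s0 s' * ∑ a, pol s' a * F s' a := fun _ => rfl
  have l1 : ∑ s, dVisit P γ ρ0 pol s * (∑ a, pol s a * F s a)
      = (1 - γ) * ∑ s, (∑' t : ℕ, γ ^ t * ∑ s0, ρ0 s0 * (M ^ t) s0 s)
          * (∑ a, pol s a * F s a) := by
    rw [Finset.mul_sum]
    apply Finset.sum_congr rfl
    intro s _
    rw [h0 s]
    ring
  rw [l1]
  congr 1
  have l2 : ∀ s : S, (∑' t : ℕ, γ ^ t * ∑ s0, ρ0 s0 * (M ^ t) s0 s) * (∑ a, pol s a * F s a)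
      = ∑' t : ℕ, (γ ^ t * ∑ s0, ρ0 s0 * (M ^ t) s0 s) * (∑ a, pol s a * F s a) :=
    fun s => tsum_mul_right.symm
  have l3 : ∀ s0 : S, ρ0 s0 * Vfun P γ F pol s0
      = ∑' t : ℕ, ρ0 s0 * (γ ^ t * ∑ s', (M ^ t) s0 s' * ∑ a, pol s' a * F s' a) :=
    fun s0 => by rw [hV s0]; exact tsum_mul_left.symm
  simp_rw [l3]
  rw [Finset.sum_congr rfl fun s _ => l2 s]
  rw [← Summable.tsum_finsetSum (fun s (_ : s ∈ Finset.univ) =>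
        (summable_d P γ ρ0 pol hM0 hM1 hγ0 hγ1 hρ0 hρ1 s).mul_right _),
    ← Summable.tsum_finsetSum (fun s0 (_ : s0 ∈ Finset.univ) =>
        (summable_V P γ F pol hM0 hM1 hγ0 hγ1 s0).mul_left (ρ0 s0))]
  apply tsum_congr
  intro t
  show ∑ s, (γ ^ t * ∑ s0, ρ0 s0 * (M ^ t) s0 s) * (∑ a, pol s a * F s a)
      = ∑ s0, ρ0 s0 * (γ ^ t * ∑ s', (M ^ t) s0 s' * ∑ a, pol s' a * F s' a)
  calc ∑ s, (γ ^ t * ∑ s0, ρ0 s0 * (M ^ t) s0 s) * (∑ a, pol s a * F s a)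
      = ∑ s, ∑ s0, ρ0 s0 * (γ ^ t * ((M ^ t) s0 s * ∑ a, pol s a * F s a)) := by
        apply Finset.sum_congr rfl
        intro s _
        symm
        calc ∑ s0, ρ0 s0 * (γ ^ t * ((M ^ t) s0 s * ∑ a, pol s a * F s a))
            = ∑ s0, (ρ0 s0 * (M ^ t) s0 s) * (γ ^ t * ∑ a, pol s a * F s a) := by
              apply Finset.sum_congr rfl
              intro s0 _
              ring
          _ = (∑ s0, ρ0 s0 * (M ^ t) s0 s) * (γ ^ t * ∑ a, pol s a * F s a) :=
              (Finset.sum_mul _ _ _).symm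
          _ = (γ ^ t * ∑ s0, ρ0 s0 * (M ^ t) s0 s) * (∑ a, pol s a * F s a) := by
              ring
    _ = ∑ s0, ∑ s, ρ0 s0 * (γ ^ t * ((M ^ t) s0 s * ∑ a, pol s a * F s a)) :=
        Finset.sum_comm
    _ = ∑ s0, ρ0 s0 * (γ ^ t * ∑ s', (M ^ t) s0 s' * ∑ a, pol s' a * F s' a) := by
        apply Finset.sum_congr rfl
        intro s0 _
        symm
        rw [Finset.mul_sum, Finset.mul_sum]

variable (pol' : S → A → ℝ)

lemma Abar_eq (hπ'1 : ∀ s, ∑ a, pol' s a = 1) (s : S) :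
    (∑ a, pol' s a * Adv P γ F pol s a)
      = (∑ a, pol' s a * F s a)
        + γ * (∑ s', transMat P pol' s s' * Vfun P γ F pol s')
        - Vfun P γ F pol s := by
  unfold Adv Qfun
  simp_rw [mul_sub, mul_add]
  rw [Finset.sum_sub_distrib, Finset.sum_add_distrib, ← Finset.sum_mul, hπ'1 s, one_mul]
  congr 1
  congr 1
  calc ∑ a, pol' s a * (γ * ∑ s', P s a s' * Vfun P γ F pol s')
      = ∑ a, ∑ s', (pol' s a * P s a s') * (γ * Vfun P γ F pol s') := by
        apply Finset.sum_congr rfl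
        intro a _
        rw [Finset.mul_sum, Finset.mul_sum]
        apply Finset.sum_congr rfl
        intro s' _
        ring
    _ = ∑ s', ∑ a, (pol' s a * P s a s') * (γ * Vfun P γ F pol s') := Finset.sum_comm
    _ = γ * ∑ s', transMat P pol' s s' * Vfun P γ F pol s' := by
        rw [Finset.mul_sum]
        apply Finset.sum_congr rfl
        intro s' _
        rw [transMat, Finset.sum_mul]
        rw [Finset.mul_sum]
        apply Finset.sum_congr rfl
        intro a _
        ring

lemma pdl (hP0 : ∀ s a s', 0 ≤ P s a s') (hP1 : ∀ s a, ∑ s', P s a s' = 1)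
    (hγ0 : 0 ≤ γ) (hγ1 : γ < 1)
    (hρ0 : ∀ s, 0 ≤ ρ0 s) (hρ1 : ∑ s, ρ0 s = 1)
    (hπ'0 : ∀ s a, 0 ≤ pol' s a) (hπ'1 : ∀ s, ∑ a, pol' s a = 1) :
    (1 - γ) * (Jret P γ ρ0 F pol' - Jret P γ ρ0 F pol)
      = ∑ s, dVisit P γ ρ0 pol' s * ∑ a, pol' s a * Adv P γ F pol s a := by
  have hM'0 : ∀ s s', 0 ≤ transMat P pol' s s' := transMat_nonneg P pol' hP0 hπ'0
  have hM'1 : ∀ s, ∑ s', transMat P pol' s s' = 1 := transMat_rowsum P pol' hP1 hπ'1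
  set M' := transMat P pol' with hM'
  set V := Vfun P γ F pol with hV
  set d' := dVisit P γ ρ0 pol' with hd'
  have hrec : ∀ s, γ * ∑ s1, d' s1 * M' s1 s = d' s - (1 - γ) * ρ0 s := by
    intro s
    have := dVisit_rec P γ ρ0 pol' hM'0 hM'1 hγ0 hγ1 hρ0 hρ1 s
    rw [hd']
    linarith [this]
  have hT1 : ∑ s, d' s * (∑ a, pol' s a * F s a) = (1 - γ) * Jret P γ ρ0 F pol' := by
    rw [hd']
    exact J_d P γ ρ0 F pol' hM'0 hM'1 hγ0 hγ1 hρ0 hρ1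
  have hT2 : ∑ s, d' s * (γ * ∑ s', M' s s' * V s')
      = ∑ s', d' s' * V s' - (1 - γ) * ∑ s', ρ0 s' * V s' := by
    calc ∑ s, d' s * (γ * ∑ s', M' s s' * V s')
        = ∑ s, ∑ s', (d' s * M' s s') * (γ * V s') := by
          apply Finset.sum_congr rfl
          intro s _
          rw [Finset.mul_sum, Finset.mul_sum]
          apply Finset.sum_congr rfl
          intro s' _
          ring
      _ = ∑ s', ∑ s, (d' s * M' s s') * (γ * V s') := Finset.sum_comm
      _ = ∑ s', (γ * ∑ s, d' s * M' s s') * V s' := by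
          apply Finset.sum_congr rfl
          intro s' _
          symm
          rw [mul_comm γ (∑ s, d' s * M' s s'), mul_assoc, Finset.sum_mul]
      _ = ∑ s', (d' s' - (1 - γ) * ρ0 s') * V s' := by
          apply Finset.sum_congr rfl
          intro s' _
          rw [hrec s']
      _ = ∑ s', d' s' * V s' - (1 - γ) * ∑ s', ρ0 s' * V s' := by
          rw [Finset.mul_sum, ← Finset.sum_sub_distrib]
          apply Finset.sum_congr rfl
          intro s' _
          ring
  have key : ∑ s, d' s * ∑ a, pol' s a * Adv P γ F pol s a
      = (1 - γ) * Jret P γ ρ0 F pol' - (1 - γ) * ∑ s', ρ0 s' * V s' := by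
    have habar : ∀ s, (∑ a, pol' s a * Adv P γ F pol s a)
        = (∑ a, pol' s a * F s a) + γ * (∑ s', M' s s' * V s') - V s :=
      Abar_eq P γ F pol pol' hπ'1
    calc ∑ s, d' s * ∑ a, pol' s a * Adv P γ F pol s a
        = ∑ s, (d' s * (∑ a, pol' s a * F s a)
            + d' s * (γ * ∑ s', M' s s' * V s') - d' s * V s) := by
          apply Finset.sum_congr rfl
          intro s _
          rw [habar s]
          ring
      _ = ∑ s, d' s * (∑ a, pol' s a * F s a)
            + ∑ s, d' s * (γ * ∑ s', M' s s' * V s') - ∑ s, d' s * V s := by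
          rw [Finset.sum_sub_distrib, Finset.sum_add_distrib]
      _ = (1 - γ) * Jret P γ ρ0 F pol' - (1 - γ) * ∑ s', ρ0 s' * V s' := by
          rw [hT1, hT2]
          ring
  rw [key]
  have : Jret P γ ρ0 F pol = ∑ s', ρ0 s' * V s' := rfl
  rw [this]
  ring

lemma row_l1 (hP0 : ∀ s a s', 0 ≤ P s a s') (hP1 : ∀ s a, ∑ s', P s a s' = 1) (s1 : S) :
    ∑ s, |transMat P pol' s1 s - transMat P pol s1 s| ≤ ∑ a, |pol' s1 a - pol s1 a| := by
  calc ∑ s, |transMat P pol' s1 s - transMat P pol s1 s|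
      = ∑ s, |∑ a, (pol' s1 a - pol s1 a) * P s1 a s| := by
        apply Finset.sum_congr rfl
        intro s _
        rw [transMat, transMat, ← Finset.sum_sub_distrib]
        congr 1
        apply Finset.sum_congr rfl
        intro a _
        ring
    _ ≤ ∑ s, ∑ a, |pol' s1 a - pol s1 a| * P s1 a s := by
        apply Finset.sum_le_sum
        intro s _
        refine (Finset.abs_sum_le_sum_abs _ _).trans ?_
        apply Finset.sum_le_sum
        intro a _
        rw [abs_mul, abs_of_nonneg (hP0 s1 a s)]
    _ = ∑ a, |pol' s1 a - pol s1 a| * ∑ s, P s1 a s := by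
        rw [Finset.sum_comm]
        apply Finset.sum_congr rfl
        intro a _
        rw [Finset.mul_sum]
    _ = ∑ a, |pol' s1 a - pol s1 a| := by
        apply Finset.sum_congr rfl
        intro a _
        rw [hP1 s1 a, mul_one]

lemma l1_diff (hP0 : ∀ s a s', 0 ≤ P s a s') (hP1 : ∀ s a, ∑ s', P s a s' = 1)
    (hγ0 : 0 ≤ γ) (hγ1 : γ < 1)
    (hρ0 : ∀ s, 0 ≤ ρ0 s) (hρ1 : ∑ s, ρ0 s = 1)
    (hπ0 : ∀ s a, 0 ≤ pol s a) (hπ1 : ∀ s, ∑ a, pol s a = 1)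
    (hπ'0 : ∀ s a, 0 ≤ pol' s a) (hπ'1 : ∀ s, ∑ a, pol' s a = 1) :
    ∑ s, |dVisit P γ ρ0 pol' s - dVisit P γ ρ0 pol s|
      ≤ (γ / (1 - γ)) * ∑ s, dVisit P γ ρ0 pol s * ∑ a, |pol' s a - pol s a| := by
  have hM0 : ∀ s s', 0 ≤ transMat P pol s s' := transMat_nonneg P pol hP0 hπ0
  have hM1 : ∀ s, ∑ s', transMat P pol s s' = 1 := transMat_rowsum P pol hP1 hπ1
  have hM'0 : ∀ s s', 0 ≤ transMat P pol' s s' := transMat_nonneg P pol' hP0 hπ'0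
  have hM'1 : ∀ s, ∑ s', transMat P pol' s s' = 1 := transMat_rowsum P pol' hP1 hπ'1
  set M := transMat P pol with hM
  set M' := transMat P pol' with hM'
  set d := dVisit P γ ρ0 pol with hd
  set d' := dVisit P γ ρ0 pol' with hd'
  have hd0 : ∀ s, 0 ≤ d s := fun s => dVisit_nonneg P γ ρ0 pol hM0 hγ0 hγ1 hρ0 s
  have hdiff : ∀ s, d' s - d s
      = γ * (∑ s1, (d' s1 - d s1) * M' s1 s + ∑ s1, d s1 * (M' s1 s - M s1 s)) := by
    intro s
    have h1 := dVisit_rec P γ ρ0 pol hM0 hM1 hγ0 hγ1 hρ0 hρ1 s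
    have h2 := dVisit_rec P γ ρ0 pol' hM'0 hM'1 hγ0 hγ1 hρ0 hρ1 s
    have h3 : ∑ s1, (d' s1 - d s1) * M' s1 s + ∑ s1, d s1 * (M' s1 s - M s1 s)
        = ∑ s1, d' s1 * M' s1 s - ∑ s1, d s1 * M s1 s := by
      rw [← Finset.sum_add_distrib, ← Finset.sum_sub_distrib]
      apply Finset.sum_congr rfl
      intro s1 _
      ring
    rw [h3]
    rw [hd', hd] at *
    rw [h1, h2]
    ring
  set E := ∑ s, |d' s - d s| with hE
  set K := ∑ s, d s * ∑ a, |pol' s a - pol s a| with hK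
  have hEbound : E ≤ γ * E + γ * K := by
    have step1 : E ≤ γ * (∑ s, ∑ s1, |d' s1 - d s1| * M' s1 s
        + ∑ s, ∑ s1, d s1 * |M' s1 s - M s1 s|) := by
      rw [← Finset.sum_add_distrib, Finset.mul_sum, hE]
      apply Finset.sum_le_sum
      intro s _
      rw [hdiff s, abs_mul, abs_of_nonneg hγ0]
      apply mul_le_mul_of_nonneg_left _ hγ0
      refine (abs_add_le _ _).trans ?_
      apply add_le_add
      · refine (Finset.abs_sum_le_sum_abs _ _).trans ?_
        apply Finset.sum_le_sum
        intro s1 _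
        rw [abs_mul, abs_of_nonneg (hM'0 s1 s)]
      · refine (Finset.abs_sum_le_sum_abs _ _).trans ?_
        apply Finset.sum_le_sum
        intro s1 _
        rw [abs_mul, abs_of_nonneg (hd0 s1)]
    have e1 : ∑ s, ∑ s1, |d' s1 - d s1| * M' s1 s = E := by
      rw [Finset.sum_comm, hE]
      apply Finset.sum_congr rfl
      intro s1 _
      rw [← Finset.mul_sum, hM'1 s1, mul_one]
    have e2 : ∑ s, ∑ s1, d s1 * |M' s1 s - M s1 s| ≤ K := by
      rw [Finset.sum_comm, hK]
      apply Finset.sum_le_sum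
      intro s1 _
      rw [← Finset.mul_sum]
      exact mul_le_mul_of_nonneg_left (row_l1 P pol pol' hP0 hP1 s1) (hd0 s1)
    calc E ≤ γ * (∑ s, ∑ s1, |d' s1 - d s1| * M' s1 s
        + ∑ s, ∑ s1, d s1 * |M' s1 s - M s1 s|) := step1
      _ ≤ γ * (E + K) := by
          apply mul_le_mul_of_nonneg_left _ hγ0
          rw [e1]
          exact add_le_add_right e2 E
      _ = γ * E + γ * K := by ring
  have h1γ : (0:ℝ) < 1 - γ := by linarith
  rw [div_mul_eq_mul_div, le_div_iff₀ h1γ]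
  nlinarith [hEbound]

lemma d_l1_chain [Nonempty S] (hP0 : ∀ s a s', 0 ≤ P s a s') (hP1 : ∀ s a, ∑ s', P s a s' = 1)
    (hγ0 : 0 ≤ γ) (hγ1 : γ < 1)
    (hρ0 : ∀ s, 0 ≤ ρ0 s) (hρ1 : ∑ s, ρ0 s = 1)
    (hπ0 : ∀ s a, 0 ≤ pol s a) (hπ1 : ∀ s, ∑ a, pol s a = 1)
    (hπ'0 : ∀ s a, 0 ≤ pol' s a) (hπ'1 : ∀ s, ∑ a, pol' s a = 1)
    (habs : ∀ s a, pol s a = 0 → pol' s a = 0)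
    (δ : ℝ) (hδ : 0 < δ) (hKL : avgKL P γ ρ0 pol' pol ≤ δ) :
    ∑ s, dVisit P γ ρ0 pol s * ∑ a, |pol' s a - pol s a| ≤ Real.sqrt (2 * δ) := by
  have hM0 : ∀ s s', 0 ≤ transMat P pol s s' := transMat_nonneg P pol hP0 hπ0
  have hM1 : ∀ s, ∑ s', transMat P pol s s' = 1 := transMat_rowsum P pol hP1 hπ1
  set d := dVisit P γ ρ0 pol with hd
  have hd0 : ∀ s, 0 ≤ d s := fun s => dVisit_nonneg P γ ρ0 pol hM0 hγ0 hγ1 hρ0 s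
  have hd1 : ∑ s, d s = 1 := dVisit_sum_one P γ ρ0 pol hM0 hM1 hγ0 hγ1 hρ0 hρ1
  set L : S → ℝ := fun s => ∑ a, |pol' s a - pol s a| with hL
  have hL0 : ∀ s, 0 ≤ L s := fun s => Finset.sum_nonneg fun a _ => abs_nonneg _
  have hpins : ∀ s, L s ^ 2 ≤ 2 * klState pol' pol s := by
    intro s
    exact pinsker_fin (fun a => pol' s a) (fun a => pol s a)
      (fun a => hπ'0 s a) (fun a => hπ0 s a) (hπ'1 s) (hπ1 s) (fun a => habs s a)
  have hKL0 : ∀ s, 0 ≤ 2 * klState pol' pol s := fun s =>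
    le_trans (sq_nonneg (L s)) (hpins s)
  have cs := Finset.sum_mul_sq_le_sq_mul_sq Finset.univ
    (fun s => Real.sqrt (d s)) (fun s => Real.sqrt (d s) * L s)
  have e0 : ∀ s : S, Real.sqrt (d s) * (Real.sqrt (d s) * L s) = d s * L s := by
    intro s
    rw [← mul_assoc, Real.mul_self_sqrt (hd0 s)]
  have e1 : ∀ s : S, Real.sqrt (d s) ^ 2 = d s := fun s => Real.sq_sqrt (hd0 s)
  have e2 : ∀ s : S, (Real.sqrt (d s) * L s) ^ 2 = d s * L s ^ 2 := by
    intro s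
    rw [mul_pow, Real.sq_sqrt (hd0 s)]
  simp only [e0] at cs
  have e3 : ∑ s, Real.sqrt (d s) ^ 2 = 1 := by
    simp only [e1]; exact hd1
  have e4 : ∑ s, (Real.sqrt (d s) * L s) ^ 2 = ∑ s, d s * L s ^ 2 :=
    Finset.sum_congr rfl fun s _ => e2 s
  rw [e3, e4, one_mul] at cs
  have h5 : ∑ s, d s * L s ^ 2 ≤ 2 * δ := by
    calc ∑ s, d s * L s ^ 2 ≤ ∑ s, d s * (2 * klState pol' pol s) :=
          Finset.sum_le_sum fun s _ => mul_le_mul_of_nonneg_left (hpins s) (hd0 s)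
      _ = 2 * avgKL P γ ρ0 pol' pol := by
          rw [avgKL, Finset.mul_sum]
          apply Finset.sum_congr rfl
          intro s _
          ring
      _ ≤ 2 * δ := by linarith
  have hsum0 : 0 ≤ ∑ s, d s * L s :=
    Finset.sum_nonneg fun s _ => mul_nonneg (hd0 s) (hL0 s)
  rw [Real.le_sqrt hsum0 (by linarith)]
  exact le_trans cs h5

lemma epsAdv_abs_le [Nonempty S] (s : S) :
    |∑ a, pol' s a * Adv P γ F pol s a| ≤ epsAdv P γ F pol pol' :=
  Finset.le_sup' (fun s => |∑ a, pol' s a * Adv P γ F pol s a|) (Finset.mem_univ s)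

lemma epsAdv_nonneg [Nonempty S] : 0 ≤ epsAdv P γ F pol pol' :=
  le_trans (abs_nonneg _) (epsAdv_abs_le P γ F pol pol' (Classical.arbitrary S))

lemma one_step [Nonempty S] (hP0 : ∀ s a s', 0 ≤ P s a s') (hP1 : ∀ s a, ∑ s', P s a s' = 1)
    (hγ0 : 0 < γ) (hγ1 : γ < 1)
    (hρ0 : ∀ s, 0 ≤ ρ0 s) (hρ1 : ∑ s, ρ0 s = 1)
    (hπ0 : ∀ s a, 0 ≤ pol s a) (hπ1 : ∀ s, ∑ a, pol s a = 1)
    (hπ'0 : ∀ s a, 0 ≤ pol' s a) (hπ'1 : ∀ s, ∑ a, pol' s a = 1)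
    (habs : ∀ s a, pol s a = 0 → pol' s a = 0)
    (δ : ℝ) (hδ : 0 < δ) (hKL : avgKL P γ ρ0 pol' pol ≤ δ) :
    Jret P γ ρ0 F pol + (1 / (1 - γ)) * surrAdv P γ ρ0 F pol pol'
      - (Real.sqrt (2 * δ) * γ / (1 - γ) ^ 2) * epsAdv P γ F pol pol'
      ≤ Jret P γ ρ0 F pol' := by
  have h1γ : (0:ℝ) < 1 - γ := by linarith
  set d := dVisit P γ ρ0 pol with hd
  set d' := dVisit P γ ρ0 pol' with hd'
  set Abar : S → ℝ := fun s => ∑ a, pol' s a * Adv P γ F pol s a with hAbar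
  set ε := epsAdv P γ F pol pol' with hε
  have hε0 : 0 ≤ ε := epsAdv_nonneg P γ F pol pol'
  have hεle : ∀ s, |Abar s| ≤ ε := fun s => epsAdv_abs_le P γ F pol pol' s
  have hpdl : (1 - γ) * (Jret P γ ρ0 F pol' - Jret P γ ρ0 F pol) = ∑ s, d' s * Abar s :=
    pdl P γ ρ0 F pol pol' hP0 hP1 hγ0.le hγ1 hρ0 hρ1 hπ'0 hπ'1
  have hsurr : surrAdv P γ ρ0 F pol pol' = ∑ s, d s * Abar s := rfl
  have hgap : |∑ s, d' s * Abar s - ∑ s, d s * Abar s| ≤ (∑ s, |d' s - d s|) * ε := by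
    rw [← Finset.sum_sub_distrib]
    have : ∀ s : S, d' s * Abar s - d s * Abar s = (d' s - d s) * Abar s := fun s => by ring
    simp_rw [this]
    refine (Finset.abs_sum_le_sum_abs _ _).trans ?_
    rw [Finset.sum_mul]
    apply Finset.sum_le_sum
    intro s _
    rw [abs_mul]
    exact mul_le_mul_of_nonneg_left (hεle s) (abs_nonneg _)
  have hl1 : ∑ s, |d' s - d s| ≤ (γ / (1 - γ)) * Real.sqrt (2 * δ) := by
    calc ∑ s, |d' s - d s|
        ≤ (γ / (1 - γ)) * ∑ s, d s * ∑ a, |pol' s a - pol s a| :=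
          l1_diff P γ ρ0 pol pol' hP0 hP1 hγ0.le hγ1 hρ0 hρ1 hπ0 hπ1 hπ'0 hπ'1
      _ ≤ (γ / (1 - γ)) * Real.sqrt (2 * δ) := by
          apply mul_le_mul_of_nonneg_left _ (by positivity)
          exact d_l1_chain P γ ρ0 pol pol' hP0 hP1 hγ0.le hγ1 hρ0 hρ1 hπ0 hπ1 hπ'0 hπ'1
            habs δ hδ hKL
  have hlow : surrAdv P γ ρ0 F pol pol' - (γ / (1 - γ)) * Real.sqrt (2 * δ) * ε
      ≤ (1 - γ) * (Jret P γ ρ0 F pol' - Jret P γ ρ0 F pol) := by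
    rw [hpdl, hsurr]
    have h := abs_le.mp hgap
    have hEε : (∑ s, |d' s - d s|) * ε ≤ (γ / (1 - γ)) * Real.sqrt (2 * δ) * ε :=
      mul_le_mul_of_nonneg_right hl1 hε0
    linarith [h.1]
  -- divide by (1 - γ)
  have key : (Real.sqrt (2 * δ) * γ / (1 - γ) ^ 2) * ε
      = ((γ / (1 - γ)) * Real.sqrt (2 * δ) * ε) / (1 - γ) := by
    field_simp
  rw [key]
  have h2 : (surrAdv P γ ρ0 F pol pol' - γ / (1 - γ) * Real.sqrt (2 * δ) * ε) / (1 - γ)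
      ≤ Jret P γ ρ0 F pol' - Jret P γ ρ0 F pol := by
    rw [div_le_iff₀ h1γ]
    nlinarith [hlow]
  have h3 : (surrAdv P γ ρ0 F pol pol' - γ / (1 - γ) * Real.sqrt (2 * δ) * ε) / (1 - γ)
      = (1 / (1 - γ)) * surrAdv P γ ρ0 F pol pol'
        - (γ / (1 - γ) * Real.sqrt (2 * δ) * ε) / (1 - γ) := by
    ring
  linarith [h2, h3.symm.le, h3.le]

end Helpers

/-- min-cost stage reward-retention bound (Lemma A.3). -/
theorem min_cost_stage_reward_retention {S A : Type*} [Fintype S] [DecidableEq S] [Fintype A] [Nonempty S] [Nonempty A]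
    (P : S → A → S → ℝ) (hP0 : ∀ s a s', 0 ≤ P s a s') (hP1 : ∀ s a, ∑ s', P s a s' = 1)
    (γ : ℝ) (hγ0 : 0 < γ) (hγ1 : γ < 1)
    (ρ0 : S → ℝ) (hρ0 : ∀ s, 0 ≤ ρ0 s) (hρ1 : ∑ s, ρ0 s = 1)
    (δ : ℝ) (hδ : 0 < δ) (g : ℝ) (n : ℕ) (hn : 1 ≤ n) (R : S → A → ℝ)
    (pol : ℕ → S → A → ℝ)
    (hpol0 : ∀ i ≤ n, ∀ s a, 0 ≤ pol i s a)
    (hpol1 : ∀ i ≤ n, ∀ s, ∑ a, pol i s a = 1)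
    (habs : ∀ i < n, ∀ s a, pol i s a = 0 → pol (i + 1) s a = 0)
    (hKL : ∀ i < n, avgKL P γ ρ0 (pol (i + 1)) (pol i) ≤ δ)
    (hsurr : ∀ i < n,
      g ≤ Jret P γ ρ0 R (pol i) + (1 / (1 - γ)) * surrAdv P γ ρ0 R (pol i) (pol (i + 1))) :
    Jret P γ ρ0 R (pol n) ≥
      g - (Real.sqrt (2 * δ) * γ / (1 - γ) ^ 2) *
            ∑ j ∈ Finset.range n, epsAdv P γ R (pol j) (pol (j + 1)) := by
  obtain ⟨m, rfl⟩ : ∃ m, n = m + 1 := ⟨n - 1, by omega⟩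
  have hm : m < m + 1 := Nat.lt_succ_self m
  have hc0 : 0 ≤ Real.sqrt (2 * δ) * γ / (1 - γ) ^ 2 := by positivity
  have hos := one_step P γ ρ0 R (pol m) (pol (m + 1)) hP0 hP1 hγ0 hγ1 hρ0 hρ1
    (hpol0 m (by omega)) (hpol1 m (by omega)) (hpol0 (m + 1) le_rfl) (hpol1 (m + 1) le_rfl)
    (habs m hm) δ hδ (hKL m hm)
  have hg := hsurr m hm
  have hεsum : epsAdv P γ R (pol m) (pol (m + 1))
      ≤ ∑ j ∈ Finset.range (m + 1), epsAdv P γ R (pol j) (pol (j + 1)) :=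
    Finset.single_le_sum (fun j _ => epsAdv_nonneg P γ R (pol j) (pol (j + 1)))
      (Finset.mem_range.mpr hm)
  have hmul := mul_le_mul_of_nonneg_left hεsum hc0
  linarith [hos, hg, hmul]
end
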